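/- arXiv:1506.05746 — 9 statements merged into one kernel-verified Lean document; each statement's English description precedes it below -/
import Mathlib

section
/- If θ = p/q with p, q coprime positive integers, p even (hence q odd), and 0 < α ≤ 1, then the series ∑_{n=1}^∞ cos^n(π p n / q) / n^α diverges to +∞. -/
open Real Filter Finset

/-- If θ = p/q with p, q coprime positive integers, p even (hence q odd), and
0 < α ≤ 1, then ∑ cosⁿ(π p n / q) / n^α diverges to +∞. -/
theorem stmt0 (p q : ℕ) (hp : 0 < p) (hq : 0 < q) (hco : Nat.Coprime p q)
    (hpe : Even p) (α : ℝ) (hα0 : 0 < α) (hα1 : α ≤ 1) :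
    Tendsto (fun N : ℕ => ∑ n ∈ Finset.Icc 1 N,
      Real.cos (Real.pi * p * n / q) ^ n / (n : ℝ) ^ α) atTop atTop := by
  have hπ := Real.pi_pos
  have hqR : (0:ℝ) < q := by exact_mod_cast hq
  set c : ℝ := max (Real.cos (Real.pi / q)) 0 with hc
  have hc0 : 0 ≤ c := le_max_right _ _
  have hc1 : c < 1 := by
    refine max_lt ?_ one_pos
    have h1 : Real.cos (Real.pi / q) < Real.cos 0 := by
      apply Real.cos_lt_cos_of_nonneg_of_le_pi le_rfl
      · exact div_le_self hπ.le (by exact_mod_cast hq)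
      · positivity
    simpa using h1
  -- Lemma A : for non-multiples of q, |cos| ≤ c
  have keyA : ∀ n : ℕ, ¬ (q ∣ n) → |Real.cos (Real.pi * p * n / q)| ≤ c := by
    intro n hdvd
    set m := (p * n) / q with hm
    set r := (p * n) % q with hr
    have hrq : r < q := Nat.mod_lt _ hq
    have hr0 : 0 < r := by
      rcases Nat.eq_zero_or_pos r with h | h
      · exact absurd ((hco.symm).dvd_of_dvd_mul_left (Nat.dvd_of_mod_eq_zero h)) hdvd
      · exact h
    have hdecomp : (p * n : ℕ) = q * m + r := (Nat.div_add_mod (p*n) q).symm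
    have hcast : (p:ℝ) * n = q * m + r := by exact_mod_cast hdecomp
    have hangle : Real.pi * p * n / q = Real.pi * r / q + (m:ℝ) * Real.pi := by
      rw [mul_assoc, hcast]; field_simp; ring
    rw [hangle]
    have habs : |Real.cos (Real.pi * r / q + (m:ℝ) * Real.pi)|
        = |Real.cos (Real.pi * r / q)| := by
      rw [show ((m:ℝ) * Real.pi) = ((m:ℤ) : ℝ) * Real.pi by push_cast; ring,
        Real.cos_add_int_mul_pi, abs_mul]
      simp
    rw [habs]
    have hrR : (1:ℝ) ≤ r := by exact_mod_cast hr0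
    have hrqR : (r:ℝ) ≤ q - 1 := by
      have : (r:ℝ) + 1 ≤ q := by exact_mod_cast hrq
      linarith
    have h1 : Real.cos (Real.pi * r / q) ≤ Real.cos (Real.pi / q) := by
      apply Real.cos_le_cos_of_nonneg_of_le_pi (by positivity)
      · rw [div_le_iff₀ hqR]
        nlinarith
      · rw [div_le_div_iff₀ hqR hqR]
        nlinarith [mul_nonneg (mul_pos hπ hqR).le (sub_nonneg.mpr hrR)]
    have h2 : Real.cos (Real.pi - Real.pi * r / q) ≤ Real.cos (Real.pi / q) := by
      apply Real.cos_le_cos_of_nonneg_of_le_pi (by positivity)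
      · have : 0 ≤ Real.pi * r / q := by positivity
        linarith
      · have key : Real.pi * r / q + Real.pi / q ≤ Real.pi := by
          rw [← add_div, div_le_iff₀ hqR]
          nlinarith [mul_nonneg hπ.le (sub_nonneg.mpr hrqR)]
        linarith
    rw [Real.cos_pi_sub] at h2
    have hle : Real.cos (Real.pi / q) ≤ c := le_max_left _ _
    exact abs_le.mpr ⟨by linarith, le_trans h1 hle⟩
  -- Lemma B : for multiples of q, cos^n = 1
  have keyB : ∀ n : ℕ, q ∣ n → Real.cos (Real.pi * p * n / q) ^ n = 1 := by
    rintro n ⟨k, rfl⟩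
    obtain ⟨s, rfl⟩ := hpe
    have : Real.pi * (s + s : ℕ) * (q * k : ℕ) / q = ((s * k : ℕ) : ℝ) * (2 * Real.pi) := by
      push_cast; field_simp; ring
    rw [this, Real.cos_nat_mul_two_pi, one_pow]
  -- main lower bound
  have hgbound : ∀ N : ℕ, (∑ m ∈ Finset.Icc 1 (N/q), ((q:ℝ) * m)⁻¹) - (1-c)⁻¹
      ≤ ∑ n ∈ Finset.Icc 1 N, Real.cos (Real.pi * p * n / q) ^ n / (n : ℝ) ^ α := by
    intro N
    set g : ℕ → ℝ := fun n => if q ∣ n then ((n:ℝ))⁻¹ else 0 with hg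
    have hgnn : ∀ n : ℕ, 0 ≤ g n := by
      intro n; simp only [hg]; split <;> positivity
    have step1 : ∀ n ∈ Finset.Icc 1 N,
        g n - c ^ n ≤ Real.cos (Real.pi * p * n / q) ^ n / (n : ℝ) ^ α := by
      intro n hn
      have hn1 : 1 ≤ n := (Finset.mem_Icc.mp hn).1
      have hn1R : (1:ℝ) ≤ n := by exact_mod_cast hn1
      have hn0R : (0:ℝ) < n := by linarith
      have hnα : (1:ℝ) ≤ (n:ℝ) ^ α := Real.one_le_rpow hn1R hα0.le
      have hcn : (0:ℝ) ≤ c ^ n := pow_nonneg hc0 n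
      by_cases hdvd : q ∣ n
      · simp only [hg, if_pos hdvd]
        rw [keyB n hdvd]
        have hle : (n:ℝ) ^ α ≤ (n:ℝ) := by
          calc (n:ℝ) ^ α ≤ (n:ℝ) ^ (1:ℝ) := Real.rpow_le_rpow_of_exponent_le hn1R hα1
          _ = n := Real.rpow_one _
        have h1 : (n:ℝ)⁻¹ ≤ ((n:ℝ) ^ α)⁻¹ := by
          apply inv_anti₀ (by positivity) hle
        rw [one_div]
        linarith
      · simp only [hg, if_neg hdvd, zero_sub]
        have habs : |Real.cos (Real.pi * p * n / q) ^ n / (n : ℝ) ^ α| ≤ c ^ n := by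
          rw [abs_div, abs_pow, abs_of_pos (by positivity : (0:ℝ) < (n:ℝ) ^ α)]
          calc |Real.cos (Real.pi * p * n / q)| ^ n / (n:ℝ) ^ α
              ≤ |Real.cos (Real.pi * p * n / q)| ^ n :=
                div_le_self (by positivity) hnα
            _ ≤ c ^ n := pow_le_pow_left₀ (abs_nonneg _) (keyA n hdvd) n
        linarith [(abs_le.mp habs).1]
    have step2 := Finset.sum_le_sum step1
    rw [Finset.sum_sub_distrib] at step2
    have hgeo : ∑ n ∈ Finset.Icc 1 N, c ^ n ≤ (1-c)⁻¹ := by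
      have hsum : Summable (fun n : ℕ => c ^ n) := summable_geometric_of_lt_one hc0 hc1
      calc ∑ n ∈ Finset.Icc 1 N, c ^ n ≤ ∑' n : ℕ, c ^ n :=
            Summable.sum_le_tsum _ (fun i _ => pow_nonneg hc0 i) hsum
        _ = (1-c)⁻¹ := tsum_geometric_of_lt_one hc0 hc1
    have himg : (∑ m ∈ Finset.Icc 1 (N/q), ((q:ℝ) * m)⁻¹) ≤ ∑ n ∈ Finset.Icc 1 N, g n := by
      have hsub : (Finset.Icc 1 (N/q)).image (fun m => q * m) ⊆ Finset.Icc 1 N := by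
        intro x hx
        simp only [Finset.mem_image, Finset.mem_Icc] at *
        obtain ⟨m, ⟨hm1, hm2⟩, rfl⟩ := hx
        refine ⟨Nat.one_le_iff_ne_zero.mpr (Nat.mul_ne_zero hq.ne' (by omega)), ?_⟩
        calc q * m ≤ q * (N / q) := Nat.mul_le_mul_left q hm2
          _ ≤ N := Nat.mul_div_le N q
      have himage : ∑ n ∈ (Finset.Icc 1 (N/q)).image (fun m => q * m), g n
          = ∑ m ∈ Finset.Icc 1 (N/q), g (q * m) :=
        Finset.sum_image (fun a _ b _ h => Nat.eq_of_mul_eq_mul_left hq h)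
      have hval : ∀ m ∈ Finset.Icc 1 (N/q), g (q * m) = ((q:ℝ) * m)⁻¹ := by
        intro m _
        simp only [hg, if_pos (Dvd.intro m rfl)]
        push_cast; ring
      calc (∑ m ∈ Finset.Icc 1 (N/q), ((q:ℝ) * m)⁻¹)
          = ∑ m ∈ Finset.Icc 1 (N/q), g (q * m) := (Finset.sum_congr rfl hval).symm
        _ = ∑ n ∈ (Finset.Icc 1 (N/q)).image (fun m => q * m), g n := himage.symm
        _ ≤ ∑ n ∈ Finset.Icc 1 N, g n :=
            Finset.sum_le_sum_of_subset_of_nonneg hsub (fun i _ _ => hgnn i)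
    linarith
  -- the lower bound tends to ∞
  have hφ : Tendsto (fun N : ℕ => (∑ m ∈ Finset.Icc 1 (N/q), ((q:ℝ) * m)⁻¹) - (1-c)⁻¹)
      atTop atTop := by
    have h1 : Tendsto (fun M : ℕ => ∑ m ∈ Finset.Icc 1 M, ((q:ℝ) * m)⁻¹) atTop atTop := by
      have hH : Tendsto (fun M : ℕ => ∑ i ∈ Finset.range M, (1:ℝ)/(i+1)) atTop atTop :=
        Real.tendsto_sum_range_one_div_nat_succ_atTop
      have heq : (fun M : ℕ => ∑ m ∈ Finset.Icc 1 M, ((q:ℝ) * m)⁻¹)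
          = fun M : ℕ => (q:ℝ)⁻¹ * ∑ i ∈ Finset.range M, (1:ℝ)/(i+1) := by
        funext M
        rw [Finset.mul_sum, show Finset.Icc 1 M = Finset.Ico 1 (M+1) by
          rw [Finset.Ico_add_one_right_eq_Icc], Finset.sum_Ico_eq_sum_range]
        simp only [Nat.add_sub_cancel]
        apply Finset.sum_congr rfl
        intro i _
        rw [mul_inv, one_div]
        push_cast
        ring_nf
      rw [heq]
      exact (hH.const_mul_atTop (by positivity))
    have h2 : Tendsto (fun N : ℕ => N / q) atTop atTop :=
      Filter.tendsto_atTop_atTop.mpr fun b => ⟨b * q, fun n hn =>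
        (Nat.le_div_iff_mul_le hq).mpr hn⟩
    simpa [sub_eq_add_neg] using tendsto_atTop_add_const_right atTop (-(1-c)⁻¹) (h1.comp h2)
  exact tendsto_atTop_mono hgbound hφ
end

section
/- If θ = p/q with p, q coprime positive integers, both p and q odd, and 0 < α ≤ 1, then the series ∑_{n=1}^∞ cos^n(π p n / q) / n^α converges but does not converge absolutely. -/
open Real Filter Finset Topology


lemma aux_cos_pow (p q : ℕ) (hq : 0 < q) (hpo : Odd p) (hqo : Odd q) (k : ℕ) :
    Real.cos (Real.pi * p * (q*k) / q) ^ (q*k) = (-1:ℝ)^k := by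
  have hq0 : (q:ℝ) ≠ 0 := Nat.cast_ne_zero.2 hq.ne'
  have h1 : Real.pi * p * ((q:ℝ)*(k:ℝ)) / q = 0 + ((p*k:ℕ):ℝ) * Real.pi := by
    push_cast; field_simp; ring
  rw [h1, Real.cos_add_nat_mul_pi, Real.cos_zero, mul_one, ← pow_mul]
  rcases Nat.even_or_odd k with hk | hk
  · rw [Even.neg_one_pow ((hk.mul_left p).mul_right _), Even.neg_one_pow hk]
  · rw [Odd.neg_one_pow ((hpo.mul hk).mul (hqo.mul hk)), Odd.neg_one_pow hk]

lemma aux_cos_bound (p q : ℕ) (hq2 : 2 ≤ q) (hco : Nat.Coprime p q) {n : ℕ} (hn : ¬ q ∣ n) :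
    |Real.cos (Real.pi * p * n / q)| ≤ |Real.cos (Real.pi / q)| := by
  have hq : 0 < q := by omega
  have hqpos : (0:ℝ) < (q:ℝ) := by exact_mod_cast hq
  set m := (p * n) % q with hm
  set t := (p * n) / q with ht
  have hmq : m < q := Nat.mod_lt _ hq
  have hm0 : m ≠ 0 := by
    intro h
    exact hn (hco.symm.dvd_of_dvd_mul_left (Nat.dvd_of_mod_eq_zero h))
  have hsplit : p * n = q * t + m := (Nat.div_add_mod (p*n) q).symm
  have hc : (p:ℝ) * n = (q:ℝ) * t + m := by exact_mod_cast congrArg (fun x : ℕ => (x:ℝ)) hsplit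
  have hangle : Real.pi * p * n / q = Real.pi * m / q + t * Real.pi := by
    rw [mul_assoc, hc]; field_simp; ring
  rw [hangle, Real.cos_add_nat_mul_pi, abs_mul, abs_pow, abs_neg, abs_one, one_pow, one_mul]
  have hπq : 0 < Real.pi / q := by positivity
  have h1m : (1:ℝ) ≤ m := by exact_mod_cast Nat.one_le_iff_ne_zero.2 hm0
  have hm' : (m:ℝ) ≤ (q:ℝ) - 1 := by
    have : (m:ℝ) + 1 ≤ q := by exact_mod_cast hmq
    linarith
  have h1 : Real.pi / q ≤ Real.pi * m / q := by
    rw [div_le_div_iff_of_pos_right hqpos]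
    nlinarith [Real.pi_pos]
  have h2 : Real.pi * m / q ≤ Real.pi - Real.pi / q := by
    have key : (Real.pi - Real.pi/q)*q = Real.pi*q - Real.pi := by field_simp
    rw [div_le_iff₀ hqpos, key]
    nlinarith [mul_le_mul_of_nonneg_left hm' Real.pi_pos.le]
  have hpos : Real.cos (Real.pi * m / q) ≤ Real.cos (Real.pi / q) :=
    Real.cos_le_cos_of_nonneg_of_le_pi hπq.le (by linarith) h1
  have hneg : Real.cos (Real.pi - Real.pi * m / q) ≤ Real.cos (Real.pi / q) :=
    Real.cos_le_cos_of_nonneg_of_le_pi hπq.le (by linarith) (by linarith)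
  rw [Real.cos_pi_sub] at hneg
  refine le_trans ?_ (le_abs_self _)
  rw [abs_le]
  exact ⟨by linarith, hpos⟩

lemma aux_r_lt_one (q : ℕ) (hq2 : 2 ≤ q) : |Real.cos (Real.pi / q)| < 1 := by
  have hq0 : (0:ℝ) < q := by exact_mod_cast (by omega : 0 < q)
  have hq2' : (2:ℝ) ≤ q := by exact_mod_cast hq2
  have h1 : 0 < Real.pi / q := by positivity
  have h2 : Real.pi / q < Real.pi := by
    rw [div_lt_iff₀ hq0]
    nlinarith [Real.pi_pos]
  rw [abs_lt]
  constructor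
  · have := Real.cos_lt_cos_of_nonneg_of_le_pi h1.le le_rfl h2
    rw [Real.cos_pi] at this; linarith
  · have := Real.cos_lt_cos_of_nonneg_of_le_pi le_rfl (by linarith) h1
    rwa [Real.cos_zero] at this


lemma aux_image (q N : ℕ) (hq : 0 < q) :
    (Finset.Icc 1 N).filter (fun n => q ∣ n) = (Finset.Icc 1 (N/q)).image (fun k => q*k) := by
  ext x
  simp only [Finset.mem_filter, Finset.mem_image, Finset.mem_Icc]
  constructor
  · rintro ⟨⟨h1, h2⟩, k, rfl⟩
    refine ⟨k, ⟨?_, (Nat.le_div_iff_mul_le hq).2 (by rw [mul_comm]; exact h2)⟩, rfl⟩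
    rcases Nat.eq_zero_or_pos k with rfl | hk
    · omega
    · exact hk
  · rintro ⟨k, ⟨hk1, hk2⟩, rfl⟩
    exact ⟨⟨Nat.one_le_iff_ne_zero.2 (by positivity), by
      have := (Nat.le_div_iff_mul_le hq).1 hk2; rw [mul_comm]; exact this⟩, ⟨k, rfl⟩⟩


private theorem stmt1_aux (p q : ℕ) (hp : 0 < p) (hq : 0 < q) (hco : Nat.Coprime p q)
    (hpo : Odd p) (hqo : Odd q) (α : ℝ) (hα0 : 0 < α) (hα1 : α ≤ 1)
    (aux_cos_pow : ∀ k : ℕ, Real.cos (Real.pi * p * (q*k) / q) ^ (q*k) = (-1:ℝ)^k)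
    (aux_cos_bound : 2 ≤ q → ∀ {n : ℕ}, ¬ q ∣ n →
      |Real.cos (Real.pi * p * n / q)| ≤ |Real.cos (Real.pi / q)|)
    (aux_r_lt_one : 2 ≤ q → |Real.cos (Real.pi / q)| < 1)
    (aux_image : ∀ N, (Finset.Icc 1 N).filter (fun n => q ∣ n)
      = (Finset.Icc 1 (N/q)).image (fun k => q*k)) :
    (∃ l : ℝ, Tendsto (fun N : ℕ => ∑ n ∈ Finset.Icc 1 N,
        Real.cos (Real.pi * p * n / q) ^ n / (n : ℝ) ^ α) atTop (nhds l)) ∧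
    ¬ Summable (fun n : ℕ => |Real.cos (Real.pi * p * n / q) ^ n / (n : ℝ) ^ α|) := by
  have hqpos : (0:ℝ) < (q:ℝ) := by exact_mod_cast hq
  set f : ℕ → ℝ := fun n => Real.cos (Real.pi * p * n / q) ^ n / (n : ℝ) ^ α with hf
  set g : ℕ → ℝ := fun n => if q ∣ n then (-1:ℝ)^(n/q) / (n:ℝ)^α else 0 with hg
  have hfg : ∀ n, q ∣ n → f n = g n := by
    rintro n ⟨k, rfl⟩
    simp only [hf, hg, if_pos (Dvd.intro k rfl)]
    rw [Nat.cast_mul, aux_cos_pow k, Nat.mul_div_cancel_left k hq]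
  have hf0 : f 0 = 0 := by
    simp [hf, Real.zero_rpow hα0.ne']
  have hg0 : g 0 = 0 := by
    simp [hg, Real.zero_rpow hα0.ne']
  have hbound : ∀ n : ℕ, ¬ q ∣ n → |f n| ≤ |Real.cos (Real.pi / q)| ^ n := by
    intro n hn
    have hq2 : 2 ≤ q := by
      rcases Nat.lt_or_ge q 2 with h | h
      · interval_cases q
        exact absurd (one_dvd n) hn
      · exact h
    have hn1 : 1 ≤ n := by
      rcases Nat.eq_zero_or_pos n with rfl | h
      · exact absurd (dvd_zero q) hn
      · exact h
    have hden : (1:ℝ) ≤ (n:ℝ) ^ α := by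
      rw [show (1:ℝ) = (1:ℝ) ^ α by simp]
      exact Real.rpow_le_rpow zero_le_one (by exact_mod_cast hn1) hα0.le
    calc |f n| = |Real.cos (Real.pi * p * n / q)| ^ n / (n:ℝ)^α := by
          rw [hf, abs_div, abs_pow, abs_of_nonneg (Real.rpow_nonneg (Nat.cast_nonneg n) α)]
      _ ≤ |Real.cos (Real.pi / q)| ^ n / (n:ℝ)^α := by
          have hnpos : (0:ℝ) < (n:ℝ)^α := by
            have : (0:ℝ) < (n:ℝ) := by exact_mod_cast hn1
            positivity
          rw [div_le_div_iff_of_pos_right hnpos]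
          exact pow_le_pow_left₀ (abs_nonneg _) (aux_cos_bound hq2 hn) n
      _ ≤ |Real.cos (Real.pi / q)| ^ n := by
          apply div_le_self (by positivity) hden
  -- h := f - g is summable
  have hsum : Summable (fun n => f n - g n) := by
    rcases Nat.lt_or_ge q 2 with hq1 | hq2
    · have : ∀ n, f n - g n = 0 := by
        intro n
        have : q = 1 := by omega
        rw [hfg n (by simp [this]), sub_self]
      simpa [funext this] using summable_zero
    · apply Summable.of_norm_bounded
        (summable_geometric_of_lt_one (abs_nonneg _) (aux_r_lt_one hq2))
      intro n
      by_cases hn : q ∣ n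
      · rw [hfg n hn, sub_self, norm_zero]
        positivity
      · have hgn : g n = 0 := by simp [hg, hn]
        rw [hgn, sub_zero, Real.norm_eq_abs]
        exact hbound n hn
  -- Icc sums of (f - g) equal range sums
  have key : ∀ N, ∑ n ∈ Finset.Icc 1 N, (f n - g n) = ∑ n ∈ Finset.range (N+1), (f n - g n) := by
    intro N
    have hins : Finset.range (N+1) = insert 0 (Finset.Icc 1 N) := by
      ext x; simp [Finset.mem_range, Finset.mem_Icc]; omega
    rw [hins, Finset.sum_insert (by simp), hf0, hg0, sub_self, zero_add]
  have htend_h : Tendsto (fun N => ∑ n ∈ Finset.Icc 1 N, (f n - g n)) atTop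
      (𝓝 (∑' n, (f n - g n))) := by
    have := hsum.hasSum.tendsto_sum_nat.comp (tendsto_add_atTop_nat 1)
    exact this.congr fun N => (key N).symm
  -- the alternating part
  set a : ℕ → ℝ := fun j => 1 / ((q:ℝ) * (1 + j)) ^ α with ha
  have hapos : ∀ j : ℕ, (0:ℝ) < ((q:ℝ) * (1 + j)) ^ α := by
    intro j; positivity
  have hanti : Antitone a := by
    intro i j hij
    apply one_div_le_one_div_of_le (hapos i)
    apply Real.rpow_le_rpow (by positivity) _ hα0.le
    have : (i:ℝ) ≤ j := by exact_mod_cast hij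
    nlinarith
  have hatend : Tendsto a atTop (𝓝 0) := by
    simp only [ha, one_div]
    have h1 : Tendsto (fun j : ℕ => (q:ℝ) * (1 + j)) atTop atTop := by
      apply tendsto_atTop_mono (fun j => ?_) tendsto_natCast_atTop_atTop
      have : (1:ℝ) ≤ q := by exact_mod_cast hq
      have hj : (0:ℝ) ≤ (j:ℝ) := Nat.cast_nonneg j
      nlinarith
    exact tendsto_inv_atTop_zero.comp ((tendsto_rpow_atTop hα0).comp h1)
  obtain ⟨l2, hl2⟩ := hanti.tendsto_alternating_series_of_tendsto_zero hatend
  have gsum : ∀ N, ∑ n ∈ Finset.Icc 1 N, g n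
      = -∑ j ∈ Finset.range (N/q), (-1:ℝ)^j * a j := by
    intro N
    rw [hg]
    rw [← Finset.sum_filter, aux_image N,
      Finset.sum_image (fun x _ y _ hxy => Nat.eq_of_mul_eq_mul_left hq hxy)]
    rw [← Finset.Ico_add_one_right_eq_Icc, Finset.sum_Ico_eq_sum_range, Nat.add_sub_cancel]
    rw [← Finset.sum_neg_distrib]
    apply Finset.sum_congr rfl
    intro j _
    rw [Nat.mul_div_cancel_left _ hq, ha]
    push_cast
    rw [pow_add, pow_one]
    ring
  have hdiv : Tendsto (fun N : ℕ => N / q) atTop atTop := by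
    apply Filter.tendsto_atTop_atTop.2
    intro b
    exact ⟨b * q, fun n hn => (Nat.le_div_iff_mul_le hq).2 hn⟩
  have htend_g : Tendsto (fun N => ∑ n ∈ Finset.Icc 1 N, g n) atTop (𝓝 (-l2)) := by
    exact ((hl2.comp hdiv).neg).congr fun N => (gsum N).symm
  constructor
  · refine ⟨(∑' n, (f n - g n)) + -l2, ?_⟩
    refine (htend_h.add htend_g).congr fun N => ?_
    rw [← Finset.sum_add_distrib]
    exact Finset.sum_congr rfl fun n _ => by ring
  · intro hs
    have hinj : Function.Injective (fun k : ℕ => q * k) :=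
      fun x y hxy => Nat.eq_of_mul_eq_mul_left hq hxy
    have h2 := hs.comp_injective hinj
    have heq : ∀ k : ℕ, |f (q*k)| = ((q:ℝ)^α)⁻¹ * ((k:ℝ)^α)⁻¹ := by
      intro k
      rw [hf]
      simp only
      rw [Nat.cast_mul, aux_cos_pow k, abs_div, abs_pow, abs_neg, abs_one, one_pow]
      rw [abs_of_nonneg (by positivity : (0:ℝ) ≤ ((q:ℝ)*(k:ℝ))^α)]
      rw [Real.mul_rpow hqpos.le (Nat.cast_nonneg k), one_div, mul_inv]
    have h3 : Summable (fun k : ℕ => ((q:ℝ)^α)⁻¹ * ((k:ℝ)^α)⁻¹) := h2.congr heq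
    have h4 : Summable (fun k : ℕ => ((k:ℝ)^α)⁻¹) := by
      have h5 := h3.mul_left ((q:ℝ)^α)
      refine h5.congr fun k => ?_
      rw [← mul_assoc, mul_inv_cancel₀ (by positivity : ((q:ℝ)^α) ≠ 0), one_mul]
    have := Real.summable_nat_rpow_inv.1 h4
    linarith

/-- If θ = p/q with p, q coprime positive integers, both odd, and 0 < α ≤ 1,
then ∑ cosⁿ(π p n / q) / n^α converges but not absolutely. -/
theorem stmt1 (p q : ℕ) (hp : 0 < p) (hq : 0 < q) (hco : Nat.Coprime p q)
    (hpo : Odd p) (hqo : Odd q) (α : ℝ) (hα0 : 0 < α) (hα1 : α ≤ 1) :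
    (∃ l : ℝ, Tendsto (fun N : ℕ => ∑ n ∈ Finset.Icc 1 N,
        Real.cos (Real.pi * p * n / q) ^ n / (n : ℝ) ^ α) atTop (nhds l)) ∧
    ¬ Summable (fun n : ℕ => |Real.cos (Real.pi * p * n / q) ^ n / (n : ℝ) ^ α|) :=
  stmt1_aux p q hp hq hco hpo hqo α hα0 hα1
    (aux_cos_pow p q hq hpo hqo)
    (fun hq2 {n} hn => aux_cos_bound p q hq2 hco hn)
    (aux_r_lt_one q)
    (fun N => aux_image q N hq)
end

section
/- If θ = p/q with p, q coprime positive integers, q ≡ 2 (mod 4), and 0 < α ≤ 1, then the series ∑_{n=1}^∞ sin^n(π p n / q) / n^α converges conditionally (converges but not absolutely). -/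
open Real Filter Finset

lemma my_sin_add_nat_mul_pi (x : ℝ) (k : ℕ) :
    Real.sin (x + k * Real.pi) = (-1 : ℝ) ^ k * Real.sin x := by
  have hc : Real.cos (k * Real.pi) = (-1 : ℝ) ^ k := by
    simpa using Real.cos_nat_mul_pi_sub 0 k
  rw [Real.sin_add, Real.sin_nat_mul_pi, hc]
  ring

lemma my_abs_sin_lt_one {x : ℝ} (h : Real.cos x ≠ 0) : |Real.sin x| < 1 := by
  refine lt_of_le_of_ne (abs_le.2 ⟨Real.neg_one_le_sin x, Real.sin_le_one x⟩) fun he => h ?_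
  have h2 : Real.cos x ^ 2 = 0 := by
    nlinarith [Real.sin_sq_add_cos_sq x, sq_abs (Real.sin x)]
  exact pow_eq_zero_iff two_ne_zero |>.1 h2

/-- If θ = p/q with p, q coprime positive integers, q ≡ 2 (mod 4), and 0 < α ≤ 1,
then ∑ sinⁿ(π p n / q) / n^α converges conditionally. -/
theorem stmt3 (p q : ℕ) (hp : 0 < p) (hq : 0 < q) (hco : Nat.Coprime p q)
    (hq4 : q % 4 = 2) (α : ℝ) (hα0 : 0 < α) (hα1 : α ≤ 1) :
    (∃ l : ℝ, Tendsto (fun N : ℕ => ∑ n ∈ Finset.Icc 1 N,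
        Real.sin (Real.pi * p * n / q) ^ n / (n : ℝ) ^ α) atTop (nhds l)) ∧
    ¬ Summable (fun n : ℕ => |Real.sin (Real.pi * p * n / q) ^ n / (n : ℝ) ^ α|) := by
  set f : ℕ → ℝ := fun n : ℕ => Real.sin (Real.pi * p * n / q) ^ n / (n : ℝ) ^ α with hf
  obtain ⟨q₁, hq2⟩ : ∃ q₁, q = 2 * q₁ := ⟨q / 2, by omega⟩
  have hq₁pos : 0 < q₁ := by omega
  have hq₁odd : q₁ % 2 = 1 := by omega
  have hpodd : p % 2 = 1 := by
    by_contra hpe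
    have h2 : 2 ∣ Nat.gcd p q := Nat.dvd_gcd (by omega) (by omega)
    have h3 : Nat.gcd p q = 1 := hco
    omega
  obtain ⟨k, hk⟩ : ∃ k, p = 2 * k + 1 := ⟨p / 2, by omega⟩
  have hqR : (q : ℝ) ≠ 0 := Nat.cast_ne_zero.2 hq.ne'
  have hq₁R : (q₁ : ℝ) ≠ 0 := Nat.cast_ne_zero.2 hq₁pos.ne'
  have hqR2 : (q : ℝ) = 2 * (q₁ : ℝ) := by exact_mod_cast hq2
  -- value of sin at special points
  have harg : ∀ j : ℕ, Real.pi * p * ((q₁ * (2 * j + 1) : ℕ) : ℝ) / q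
      = Real.pi * p / 2 + ((p * j : ℕ) : ℝ) * Real.pi := by
    intro j
    rw [hqR2]
    push_cast
    field_simp
    ring
  have hsinhalf : Real.sin (Real.pi * p / 2) = (-1 : ℝ) ^ k := by
    have h1 : Real.pi * p / 2 = Real.pi / 2 + (k : ℝ) * Real.pi := by
      rw [hk]; push_cast; ring
    rw [h1]
    have := my_sin_add_nat_mul_pi (Real.pi / 2) k
    rw [this, Real.sin_pi_div_two, mul_one]
  have hpo : Odd p := Nat.odd_iff.2 hpodd
  have hsinval : ∀ j : ℕ, Real.sin (Real.pi * p * ((q₁ * (2 * j + 1) : ℕ) : ℝ) / q)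
      = (-1 : ℝ) ^ (j + k) := by
    intro j
    rw [harg j, my_sin_add_nat_mul_pi, hsinhalf, pow_add]
    congr 1
    rcases Nat.even_or_odd j with hj | hj
    · rw [(hj.mul_left p).neg_one_pow, hj.neg_one_pow]
    · rw [(hpo.mul hj).neg_one_pow, hj.neg_one_pow]
  set b : ℕ → ℝ := fun j => 1 / ((q₁ * (2 * j + 1) : ℕ) : ℝ) ^ α with hb
  have hnpos : ∀ j : ℕ, (0 : ℝ) < ((q₁ * (2 * j + 1) : ℕ) : ℝ) :=
    fun j => by exact_mod_cast Nat.mul_pos hq₁pos (by omega)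
  have hval : ∀ j : ℕ, f (q₁ * (2 * j + 1))
      = (-1 : ℝ) ^ k * ((-1 : ℝ) ^ j * b j) := by
    intro j
    have hodd : Odd (q₁ * (2 * j + 1)) := (Nat.odd_iff.2 hq₁odd).mul ⟨j, by ring⟩
    simp only [hf, hb]
    rw [hsinval j, ← pow_mul]
    have h1 : (-1 : ℝ) ^ ((j + k) * (q₁ * (2 * j + 1))) = (-1 : ℝ) ^ (j + k) := by
      rcases Nat.even_or_odd (j + k) with h | h
      · rw [(h.mul_right _).neg_one_pow, h.neg_one_pow]
      · rw [(h.mul hodd).neg_one_pow, h.neg_one_pow]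
    rw [h1, pow_add]
    ring
  have hbanti : Antitone b := by
    intro i j hij
    simp only [hb]
    apply one_div_le_one_div_of_le (Real.rpow_pos_of_pos (hnpos i) α)
    apply Real.rpow_le_rpow (hnpos i).le ?_ hα0.le
    exact_mod_cast Nat.mul_le_mul_left _ (by omega)
  have hb0 : Tendsto b atTop (nhds 0) := by
    have hx : Tendsto (fun j : ℕ => ((j : ℝ) + 1) ^ α) atTop atTop :=
      (tendsto_rpow_atTop hα0).comp
        (tendsto_atTop_add_const_right _ 1 tendsto_natCast_atTop_atTop)
    have h1 : Tendsto (fun j : ℕ => 1 / ((j : ℝ) + 1) ^ α) atTop (nhds 0) := by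
      have := hx.inv_tendsto_atTop; simp only [one_div]; exact this
    apply tendsto_of_tendsto_of_tendsto_of_le_of_le tendsto_const_nhds h1
    · intro j; simp only [hb]; positivity
    · intro j
      simp only [hb]
      apply one_div_le_one_div_of_le (by positivity)
      apply Real.rpow_le_rpow (by positivity) ?_ hα0.le
      have : j + 1 ≤ q₁ * (2 * j + 1) := by nlinarith [hq₁pos]
      push_cast
      exact_mod_cast this
  obtain ⟨L, hL⟩ := hbanti.tendsto_alternating_series_of_tendsto_zero hb0
  set c : ℕ → ℕ := fun N => ((N - 1) / q₁ + 1) / 2 with hc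
  have key : ∀ N j, j < c N ↔ q₁ * (2 * j + 1) < N := by
    intro N j
    have h2 : 1 ≤ q₁ * (2 * j + 1) := Nat.one_le_iff_ne_zero.2 (by positivity)
    have h1 : (2 * j + 1) ≤ (N - 1) / q₁ ↔ q₁ * (2 * j + 1) ≤ N - 1 := by
      rw [Nat.le_div_iff_mul_le hq₁pos, mul_comm]
    simp only [hc]
    generalize hA : q₁ * (2 * j + 1) = A at h1 h2 ⊢
    generalize hM : (N - 1) / q₁ = M at h1 ⊢
    omega
  have hcat : Tendsto c atTop atTop :=
    tendsto_atTop_atTop.2 fun K => ⟨q₁ * (2 * K + 1) + 1, fun N hN => ((key N K).2 (by omega)).le⟩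
  set g : ℕ → ℝ := fun n => if n % q = q₁ then f n else 0 with hg
  set h : ℕ → ℝ := fun n => if n % q = q₁ then 0 else f n with hh
  have hf0 : f 0 = 0 := by
    simp [hf, Real.zero_rpow hα0.ne']
  have hmodform : ∀ n : ℕ, n % q = q₁ → n = q₁ * (2 * (n / q) + 1) := by
    intro n hn
    have h0 : q * (n / q) + n % q = n := Nat.div_add_mod n q
    have h1 : q₁ * (2 * (n / q) + 1) = q * (n / q) + q₁ := by rw [hq2]; ring
    omega
  have hgsum : ∀ N, (∑ n ∈ Finset.range N, g n)
      = (-1 : ℝ) ^ k * ∑ i ∈ Finset.range (c N), (-1 : ℝ) ^ i * b i := by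
    intro N
    rw [Finset.mul_sum]
    simp only [hg]
    rw [← Finset.sum_filter]
    refine Finset.sum_nbij' (fun n => n / q) (fun j => q₁ * (2 * j + 1)) ?_ ?_ ?_ ?_ ?_ <;>
      beta_reduce
    · intro a ha
      rw [Finset.mem_filter, Finset.mem_range] at ha
      rw [Finset.mem_range, key]
      calc q₁ * (2 * (a / q) + 1) = a := (hmodform a ha.2).symm
        _ < N := ha.1
    · intro j hj
      rw [Finset.mem_range] at hj
      rw [Finset.mem_filter, Finset.mem_range]
      constructor
      · exact (key N j).1 hj
      · have h1 : q₁ * (2 * j + 1) = q * j + q₁ := by rw [hq2]; ring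
        rw [h1, Nat.mul_add_mod, Nat.mod_eq_of_lt (by omega)]
    · intro a ha
      rw [Finset.mem_filter] at ha
      exact (hmodform a ha.2).symm
    · intro j hj
      have h1 : q₁ * (2 * j + 1) = q * j + q₁ := by rw [hq2]; ring
      rw [h1, Nat.mul_add_div hq, Nat.div_eq_of_lt (by omega), add_zero]
    · intro a ha
      rw [Finset.mem_filter] at ha
      conv_lhs => rw [hmodform a ha.2]
      exact hval (a / q)
  -- the geometric bound
  set s0 : Finset ℕ := (Finset.range q).filter (fun r => r ≠ q₁) with hs0
  have h0mem : (0 : ℕ) ∈ s0 := Finset.mem_filter.2 ⟨Finset.mem_range.2 hq, by omega⟩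
  have hs0ne : s0.Nonempty := ⟨0, h0mem⟩
  set c' : ℝ := s0.sup' hs0ne (fun r : ℕ => |Real.sin (Real.pi * p * r / q)|) with hc'
  have hc'0 : 0 ≤ c' :=
    le_trans (abs_nonneg _) (Finset.le_sup' (fun r : ℕ => |Real.sin (Real.pi * p * r / q)|) h0mem)
  have hc'1 : c' < 1 := by
    rw [hc', Finset.sup'_lt_iff]
    intro r hr
    rw [hs0, Finset.mem_filter, Finset.mem_range] at hr
    apply my_abs_sin_lt_one
    intro hcos
    rw [Real.cos_eq_zero_iff] at hcos
    obtain ⟨m, hm⟩ := hcos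
    -- derive integer equation
    have hint : 2 * (p : ℝ) * r = (2 * (m : ℝ) + 1) * q := by
      have hπ := Real.pi_ne_zero
      field_simp at hm
      apply mul_left_cancel₀ hπ
      linear_combination π * hm
    have hintZ : 2 * (p : ℤ) * r = (2 * m + 1) * q := by exact_mod_cast hint
    have hqz : (q : ℤ) = 2 * q₁ := by exact_mod_cast hq2
    have h' : (p : ℤ) * r = (2 * m + 1) * q₁ := by
      apply mul_left_cancel₀ (two_ne_zero (α := ℤ))
      rw [hqz] at hintZ
      linear_combination hintZ
    have hdvdZ : (q₁ : ℤ) ∣ ((p * r : ℕ) : ℤ) := ⟨2 * m + 1, by push_cast; linear_combination h'⟩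
    have hdvd : q₁ ∣ p * r := Int.ofNat_dvd.1 (by exact_mod_cast hdvdZ)
    have hco1 : Nat.Coprime p q₁ := hco.coprime_dvd_right ⟨2, by omega⟩
    have hdr : q₁ ∣ r := (Nat.Coprime.dvd_of_dvd_mul_left hco1.symm) hdvd
    obtain ⟨t, ht⟩ := hdr
    have ht1 : t = 0 := by
      rcases Nat.lt_or_ge t 2 with h | h
      · interval_cases t
        · rfl
        · exfalso; apply hr.2; omega
      · exfalso; nlinarith [hr.1]
    rw [ht1, Nat.mul_zero] at ht
    rw [ht] at h'
    simp at h'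
    rcases h' with h' | h'
    · omega
    · omega
  have hper : ∀ n : ℕ, |Real.sin (Real.pi * p * n / q)| = |Real.sin (Real.pi * p * ((n % q : ℕ) : ℝ) / q)| := by
    intro n
    have hn : (n : ℝ) = q * ((n / q : ℕ) : ℝ) + ((n % q : ℕ) : ℝ) := by
      exact_mod_cast (Nat.div_add_mod n q).symm
    have harg2 : Real.pi * p * n / q
        = Real.pi * p * ((n % q : ℕ) : ℝ) / q + ((p * (n / q) : ℕ) : ℝ) * Real.pi := by
      rw [hn]; push_cast; field_simp; ring
    rw [harg2, my_sin_add_nat_mul_pi, abs_mul, abs_pow, abs_neg, abs_one, one_pow, one_mul]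
  have hbound : ∀ n : ℕ, n % q ≠ q₁ → |Real.sin (Real.pi * p * n / q)| ≤ c' := by
    intro n hn
    rw [hper n]
    exact Finset.le_sup' (fun r : ℕ => |Real.sin (Real.pi * p * r / q)|)
      (Finset.mem_filter.2 ⟨Finset.mem_range.2 (Nat.mod_lt n hq), hn⟩)
  have hhsum : Summable h := by
    apply Summable.of_norm_bounded (summable_geometric_of_lt_one hc'0 hc'1)
    intro n
    by_cases hn : n % q = q₁
    · simp only [hh, if_pos hn, norm_zero]
      positivity
    · simp only [hh, if_neg hn, Real.norm_eq_abs]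
      rcases Nat.eq_zero_or_pos n with rfl | hn1
      · rw [hf0]; simp
      · have h1 : (1 : ℝ) ≤ (n : ℝ) ^ α := by
          calc (1 : ℝ) = (n : ℝ) ^ (0 : ℝ) := (Real.rpow_zero _).symm
            _ ≤ (n : ℝ) ^ α := Real.rpow_le_rpow_of_exponent_le (by exact_mod_cast hn1) hα0.le
        have hna : (0 : ℝ) < (n : ℝ) ^ α := Real.rpow_pos_of_pos (by exact_mod_cast hn1) α
        have h2 : |f n| = |Real.sin (Real.pi * p * n / q)| ^ n / (n : ℝ) ^ α := by
          simp only [hf]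
          rw [abs_div, abs_pow, abs_of_pos hna]
        rw [h2]
        calc |Real.sin (Real.pi * p * n / q)| ^ n / (n : ℝ) ^ α
            ≤ c' ^ n / (n : ℝ) ^ α := by
              gcongr
              exact hbound n hn
          _ ≤ c' ^ n := div_le_self (pow_nonneg hc'0 n) h1
  have hdecomp : ∀ N, (∑ n ∈ Finset.Icc 1 N, f n)
      = ((-1 : ℝ) ^ k * ∑ i ∈ Finset.range (c (N + 1)), (-1 : ℝ) ^ i * b i)
        + ∑ n ∈ Finset.range (N + 1), h n := by
    intro N
    have h1 : Finset.Icc 1 N = (Finset.range (N + 1)).erase 0 := by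
      ext x; simp [Nat.lt_succ_iff]; omega
    rw [h1, Finset.sum_erase _ hf0, ← hgsum (N + 1), ← Finset.sum_add_distrib]
    apply Finset.sum_congr rfl
    intro n _
    by_cases hn : n % q = q₁ <;> simp [hg, hh, hn]
  constructor
  · refine ⟨(-1 : ℝ) ^ k * L + ∑' n, h n, ?_⟩
    have hT1 : Tendsto (fun N : ℕ => (-1 : ℝ) ^ k * ∑ i ∈ Finset.range (c (N + 1)), (-1 : ℝ) ^ i * b i)
        atTop (nhds ((-1 : ℝ) ^ k * L)) :=
      Tendsto.const_mul _ (hL.comp (hcat.comp (tendsto_add_atTop_nat 1)))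
    have hT2 : Tendsto (fun N : ℕ => ∑ n ∈ Finset.range (N + 1), h n) atTop (nhds (∑' n, h n)) :=
      (hhsum.hasSum.tendsto_sum_nat).comp (tendsto_add_atTop_nat 1)
    exact (hT1.add hT2).congr fun N => (hdecomp N).symm
  · intro hs
    have hs' : Summable (fun n : ℕ => |f n|) := hs
    have hinj : Function.Injective (fun j : ℕ => q₁ * (2 * j + 1)) := by
      intro a b' hab
      simp only at hab
      have := Nat.eq_of_mul_eq_mul_left hq₁pos hab
      omega
    have h2 := hs'.comp_injective hinj
    have h3 : Summable b := by
      apply h2.congr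
      intro j
      show |f (q₁ * (2 * j + 1))| = b j
      rw [hval j, abs_mul, abs_mul, abs_pow, abs_pow, abs_neg, abs_one, one_pow, one_pow,
        one_mul, one_mul]
      apply abs_of_nonneg
      simp only [hb]
      positivity
    have h4 : Summable (fun j : ℕ => (1 : ℝ) / ((q : ℝ) ^ α * ((j : ℝ) + 1) ^ α)) := by
      apply Summable.of_nonneg_of_le (fun j => by positivity) (fun j => ?_) h3
      simp only [hb]
      apply one_div_le_one_div_of_le (Real.rpow_pos_of_pos (hnpos j) α)
      rw [← Real.mul_rpow (by positivity) (by positivity)]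
      apply Real.rpow_le_rpow (hnpos j).le ?_ hα0.le
      rw [hqR2]
      push_cast
      nlinarith [show (0:ℝ) ≤ (q₁:ℝ) from by positivity, show (0:ℝ) ≤ (j:ℝ) from by positivity]
    have h5 : Summable (fun j : ℕ => 1 / ((j : ℝ) + 1) ^ α) := by
      have h5' := h4.mul_left ((q : ℝ) ^ α)
      apply h5'.congr
      intro j
      have hq0 : ((q : ℝ) ^ α) ≠ 0 := (Real.rpow_pos_of_pos (by exact_mod_cast hq) α).ne'
      field_simp
    have h6 : Summable (fun j : ℕ => 1 / (j : ℝ) ^ α) := by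
      apply (summable_nat_add_iff 1).1
      apply h5.congr
      intro j
      push_cast
      ring_nf
    rw [Real.summable_one_div_nat_rpow] at h6
    linarith
end

section
/- If θ = p/q with p, q coprime positive integers, 4 | q, and 0 < α ≤ 1, then the series ∑_{n=1}^∞ sin^n(π p n / q) / n^α diverges to +∞. -/
open Real Filter Finset

/-- On the residue class where `p*n ≡ q/2 (mod q)` (with `q = 4*m`), the power of sine is `1`. -/
lemma aux_sin_one (p m n : ℕ) (hp2 : ¬ 2 ∣ p) (hm : 0 < m)
    (h : (p * n) % (4 * m) = 2 * m) :
    Real.sin (Real.pi * p * n / (4 * m)) ^ n = 1 := by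
  have hq0 : 0 < 4 * m := by omega
  set k : ℕ := (p * n) / (4 * m) with hk
  have hpn : p * n = 4 * m * k + 2 * m := by
    rw [hk, ← h]; exact (Nat.div_add_mod _ _).symm
  -- n is even
  have hn2 : 2 ∣ n := by
    have h2 : 2 ∣ p * n := ⟨2 * m * k + m, by rw [hpn]; ring⟩
    exact (Nat.Coprime.dvd_of_dvd_mul_left (Nat.coprime_two_left.mpr
      (Nat.odd_iff.mpr (Nat.two_dvd_ne_zero.mp hp2))) h2)
  have hmR : (0:ℝ) < (m:ℝ) := by exact_mod_cast hm
  -- compute the angle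
  have hpnR : (p:ℝ) * n = 4 * m * k + 2 * m := by exact_mod_cast hpn
  have hangle : Real.pi * p * n / (4 * m) = k * Real.pi + Real.pi / 2 := by
    rw [show Real.pi * p * n = Real.pi * ((p:ℝ) * n) by ring, hpnR]
    field_simp
    ring
  rw [hangle, Real.sin_add, Real.sin_pi_div_two, Real.cos_pi_div_two]
  have hsk : Real.sin ((k : ℝ) * Real.pi) = 0 := Real.sin_nat_mul_pi k
  have hck : Real.cos ((k : ℝ) * Real.pi) = (-1 : ℝ) ^ k := by
    have := Real.cos_nat_mul_pi_sub 0 k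
    simpa using this
  rw [hsk, hck]
  obtain ⟨j, rfl⟩ := hn2
  rw [mul_zero, zero_add, mul_one, ← pow_mul]
  rw [show k * (2 * j) = 2 * (k * j) by ring, pow_mul]
  norm_num

/-- Away from the residue class, the sine is bounded by `cos (π/q) < 1`. -/
lemma aux_sin_lt (p m n : ℕ) (hm : 0 < m) (h : (p * n) % (4 * m) ≠ 2 * m) :
    |Real.sin (Real.pi * p * n / (4 * m))| ≤ Real.cos (Real.pi / (4 * m)) := by
  have hq0 : 0 < 4 * m := by omega
  set k : ℕ := (p * n) / (4 * m) with hk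
  set r : ℕ := (p * n) % (4 * m) with hr
  have hrq : r < 4 * m := Nat.mod_lt _ hq0
  have hpn : p * n = 4 * m * k + r := by
    rw [hk, hr]; exact (Nat.div_add_mod _ _).symm
  have hmR : (0:ℝ) < (m:ℝ) := by exact_mod_cast hm
  have hpi := Real.pi_pos
  have hpnR : (p:ℝ) * n = 4 * m * k + r := by exact_mod_cast hpn
  have hangle : Real.pi * p * n / (4 * m) = k * Real.pi + Real.pi * r / (4 * m) := by
    rw [show Real.pi * p * n = Real.pi * ((p:ℝ) * n) by ring, hpnR]
    field_simp
  rw [hangle, Real.sin_add, Real.sin_nat_mul_pi]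
  have hck : |Real.cos ((k : ℝ) * Real.pi)| = 1 := by
    have := Real.cos_nat_mul_pi_sub 0 k
    simp only [sub_zero, Real.cos_zero, mul_one] at this
    rw [this, abs_pow, abs_neg, abs_one, one_pow]
  rw [zero_mul, zero_add, abs_mul, hck, one_mul]
  -- Now bound |sin (π r / (4m))|
  have hsc : Real.sin (Real.pi * r / (4 * m)) = Real.cos (Real.pi / 2 - Real.pi * r / (4 * m)) :=
    (Real.cos_pi_div_two_sub _).symm
  set t : ℝ := Real.pi / 2 - Real.pi * r / (4 * m) with ht
  -- |t| ∈ [π/(4m), π/2]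
  have hrR0 : (0:ℝ) ≤ (r:ℝ) := by positivity
  have hrRq : (r:ℝ) < 4 * m := by exact_mod_cast hrq
  have hfrac_nonneg : 0 ≤ Real.pi * r / (4 * m) := by positivity
  have hfrac_lt : Real.pi * r / (4 * m) < Real.pi := by
    rw [div_lt_iff₀ (by positivity)]
    nlinarith
  have habs_le : |t| ≤ Real.pi / 2 := by
    rw [abs_le, ht]
    constructor <;> [linarith; linarith]
  have habs_ge : Real.pi / (4 * m) ≤ |t| := by
    have hteq : t = Real.pi * (2 * (m:ℝ) - r) / (4 * m) := by
      rw [ht]; field_simp; ring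
    have hz : ∃ z : ℤ, (2 * (m:ℝ) - r) = z := ⟨(2 * m : ℤ) - r, by push_cast; ring⟩
    obtain ⟨z, hz'⟩ := hz
    have hzne : z ≠ 0 := by
      intro hcon
      apply h
      have : (2 * (m:ℝ) - r) = 0 := by rw [hz', hcon]; norm_num
      have : (r : ℝ) = 2 * m := by linarith
      exact_mod_cast this
    have hint : (1:ℝ) ≤ |2 * (m:ℝ) - r| := by
      rw [hz', ← Int.cast_abs]
      exact_mod_cast Int.one_le_abs hzne
    rw [hteq, abs_div, abs_mul, abs_of_nonneg hpi.le,
      abs_of_nonneg (by positivity : (0:ℝ) ≤ 4 * (m:ℝ))]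
    rw [div_le_div_iff₀ (by positivity) (by positivity)]
    nlinarith [mul_le_mul_of_nonneg_left hint
      (mul_nonneg hpi.le (by positivity : (0:ℝ) ≤ 4 * (m:ℝ)))]
  have hcos_nonneg : 0 ≤ Real.cos t :=
    Real.cos_nonneg_of_mem_Icc ⟨(abs_le.mp habs_le).1, (abs_le.mp habs_le).2⟩
  rw [hsc, abs_of_nonneg hcos_nonneg, ← Real.cos_abs]
  exact Real.cos_le_cos_of_nonneg_of_le_pi (by positivity) (by linarith) habs_ge

/-- Sums over `range (N+1)` and `Icc 1 N` agree when `f 0 = 0`. -/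
lemma sum_range_succ_eq_sum_Icc (f : ℕ → ℝ) (hf0 : f 0 = 0) (N : ℕ) :
    ∑ n ∈ Finset.range (N + 1), f n = ∑ n ∈ Finset.Icc 1 N, f n := by
  have h1 : Finset.range (N + 1) = insert 0 (Finset.Icc 1 N) := by
    ext x
    simp only [Finset.mem_range, Finset.mem_insert, Finset.mem_Icc]
    omega
  rw [h1, Finset.sum_insert (by simp), hf0, zero_add]

/-- If θ = p/q with p, q coprime positive integers and 4 ∣ q, and 0 < α ≤ 1,
then ∑ sinⁿ(π p n / q) / n^α diverges to +∞. -/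
theorem stmt4 (p q : ℕ) (hp : 0 < p) (hq : 0 < q) (hco : Nat.Coprime p q)
    (hq4 : 4 ∣ q) (α : ℝ) (hα0 : 0 < α) (hα1 : α ≤ 1) :
    Tendsto (fun N : ℕ => ∑ n ∈ Finset.Icc 1 N,
      Real.sin (Real.pi * p * n / q) ^ n / (n : ℝ) ^ α) atTop atTop := by
  obtain ⟨m, rfl⟩ := hq4
  have hm : 0 < m := by omega
  have hq0 : 0 < 4 * m := by omega
  haveI : NeZero (4 * m) := ⟨by omega⟩
  simp only [Nat.cast_mul, Nat.cast_ofNat]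
  have hp2 : ¬ 2 ∣ p := by
    intro h2
    have : (2 : ℕ) ∣ Nat.gcd p (4 * m) := Nat.dvd_gcd h2 ⟨2 * m, by ring⟩
    rw [hco] at this; omega
  -- the "good" part
  set g : ℕ → ℝ := fun n => if (p * n) % (4 * m) = 2 * m then 1 / (n : ℝ) ^ α else 0 with hg
  -- the "bad" part
  set b : ℕ → ℝ := fun n => Real.sin (Real.pi * p * n / (4 * m)) ^ n / (n : ℝ) ^ α - g n with hb
  have hterm : ∀ n : ℕ, Real.sin (Real.pi * p * n / (4 * m)) ^ n / (n : ℝ) ^ α = g n + b n := by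
    intro n; rw [hb]; ring
  set c : ℝ := Real.cos (Real.pi / (4 * m)) with hc
  have hπm : 0 < Real.pi / (4 * m) := by positivity
  have hmR : (1:ℝ) ≤ (m:ℝ) := by exact_mod_cast hm
  have hc0 : 0 ≤ c := by
    apply Real.cos_nonneg_of_mem_Icc
    constructor
    · linarith [Real.pi_pos]
    · rw [div_le_div_iff₀ (by positivity) (by norm_num : (0:ℝ) < 2)]
      nlinarith [Real.pi_pos]
  have hc1 : c < 1 := by
    calc c < Real.cos 0 := by
            apply Real.cos_lt_cos_of_nonneg_of_le_pi le_rfl ?_ hπm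
            rw [div_le_iff₀ (by positivity)]
            nlinarith [Real.pi_pos]
      _ = 1 := Real.cos_zero
  -- b is summable
  have hb_bound : ∀ n : ℕ, ‖b n‖ ≤ c ^ n := by
    intro n
    rcases Nat.eq_zero_or_pos n with rfl | hn
    · simp only [hb, hg]
      have : (2 : ℕ) * m ≠ 0 := by omega
      simp [Real.zero_rpow hα0.ne', this.symm, Nat.mul_zero, if_neg (by omega : ¬ (0 = 2 * m))]
    · by_cases hcond : (p * n) % (4 * m) = 2 * m
      · have h1 := aux_sin_one p m n hp2 hm hcond
        simp only [hb, hg, if_pos hcond, h1]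
        simp [one_div]
        positivity
      · have h2 := aux_sin_lt p m n hm hcond
        simp only [hb, hg, if_neg hcond, sub_zero]
        rw [norm_div, norm_pow]
        have hn1 : (1:ℝ) ≤ (n : ℝ) ^ α := by
          apply Real.one_le_rpow (by exact_mod_cast hn) hα0.le
        have hnorm_pow : ‖Real.sin (Real.pi * p * n / (4 * m))‖ ^ n ≤ c ^ n := by
          apply pow_le_pow_left₀ (norm_nonneg _) ?_ n
          rw [Real.norm_eq_abs]; exact h2
        have hnorm1 : (1:ℝ) ≤ ‖(n : ℝ) ^ α‖ := by
          rw [Real.norm_eq_abs, abs_of_nonneg (Real.rpow_nonneg (by positivity) _)]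
          exact hn1
        calc ‖Real.sin (Real.pi * p * n / (4 * m))‖ ^ n / ‖(n : ℝ) ^ α‖
            ≤ ‖Real.sin (Real.pi * p * n / (4 * m))‖ ^ n :=
              div_le_self (by positivity) hnorm1
          _ ≤ c ^ n := hnorm_pow
  have hb_sum : Summable b :=
    Summable.of_norm_bounded (summable_geometric_of_lt_one hc0 hc1) hb_bound
  have hcond0 : ¬ (p * 0) % (4 * m) = 2 * m := by
    rw [Nat.mul_zero, Nat.zero_mod]; omega
  have hg0 : g 0 = 0 := by
    simp only [hg]; rw [if_neg hcond0]
  have hb0 : b 0 = 0 := by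
    simp only [hb, hg0, sub_zero, Nat.cast_zero, pow_zero]
    rw [Real.zero_rpow hα0.ne']
    norm_num
  -- partial sums of b converge
  have hBtend : Tendsto (fun N : ℕ => ∑ n ∈ Finset.Icc 1 N, b n) atTop (nhds (∑' n, b n)) := by
    have h1 := hb_sum.hasSum.tendsto_sum_nat
    have h2 := h1.comp (tendsto_add_atTop_nat 1)
    exact h2.congr fun N => sum_range_succ_eq_sum_Icc b hb0 N
  -- construct n1 with p * n1 ≡ 2m (mod 4m)
  have hpu : IsUnit ((p : ZMod (4 * m))) := (ZMod.isUnit_iff_coprime p (4 * m)).mpr hco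
  set x : ZMod (4 * m) := (p : ZMod (4 * m))⁻¹ * ((2 * m : ℕ) : ZMod (4 * m)) with hx
  set n1 : ℕ := x.val with hn1
  have hn1mod : (p * n1) % (4 * m) = 2 * m := by
    have h1 : ((p * n1 : ℕ) : ZMod (4 * m)) = ((2 * m : ℕ) : ZMod (4 * m)) := by
      rw [Nat.cast_mul, hn1, ZMod.natCast_zmod_val, hx, ← mul_assoc,
        ZMod.mul_inv_of_unit _ hpu, one_mul]
    have h2 := congrArg ZMod.val h1
    rwa [ZMod.val_natCast, ZMod.val_natCast, Nat.mod_eq_of_lt (show 2 * m < 4 * m by omega)] at h2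
  have hn1pos : 0 < n1 := by
    rcases Nat.eq_zero_or_pos n1 with h0 | h
    · exfalso; rw [h0, Nat.mul_zero, Nat.zero_mod] at hn1mod; omega
    · exact h
  set e : ℕ → ℕ := fun k => n1 + k * (4 * m) with he
  have hkey : ∀ k : ℕ, (p * e k) % (4 * m) = 2 * m := by
    intro k
    have h1 : p * e k = p * n1 + (p * k) * (4 * m) := by rw [he]; ring
    rw [h1, Nat.add_mul_mod_self_right, hn1mod]
  have hg_nonneg : ∀ n, 0 ≤ g n := by
    intro n; simp only [hg]; split <;> positivity
  -- g is not summable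
  have hg_not : ¬ Summable g := by
    intro hs
    have hemono : StrictMono e := fun a b hab => by
      simp only [he]
      exact Nat.add_lt_add_left ((Nat.mul_lt_mul_right hq0).mpr hab) n1
    have hcomp := hs.comp_injective hemono.injective
    have hsum2 : Summable (fun k : ℕ => 1 / ((e k : ℝ)) ^ α) :=
      hcomp.congr fun k => by
        simp only [Function.comp_apply, hg]; rw [if_pos (hkey k)]
    have hek1 : ∀ k : ℕ, (1 : ℝ) ≤ (e k : ℝ) := by
      intro k
      have h2 : 1 ≤ e k := by
        have h3 : n1 ≤ e k := by simp [he]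
        omega
      exact_mod_cast h2
    have hterm_ge : ∀ k : ℕ, (1 / ((n1 : ℝ) + 4 * m)) * (1 / ((k : ℝ) + 1))
        ≤ 1 / ((e k : ℝ)) ^ α := by
      intro k
      have hekpos : (0:ℝ) < (e k : ℝ) := lt_of_lt_of_le one_pos (hek1 k)
      have h1 : ((e k : ℝ)) ^ α ≤ (e k : ℝ) := by
        calc ((e k : ℝ)) ^ α ≤ ((e k : ℝ)) ^ (1:ℝ) :=
              Real.rpow_le_rpow_of_exponent_le (hek1 k) hα1
          _ = (e k : ℝ) := Real.rpow_one _
      have h2 : 1 / ((e k : ℝ)) ≤ 1 / ((e k : ℝ)) ^ α :=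
        one_div_le_one_div_of_le (Real.rpow_pos_of_pos hekpos α) h1
      refine le_trans ?_ h2
      rw [div_mul_div_comm, one_mul]
      apply one_div_le_one_div_of_le hekpos
      have hkR : (0:ℝ) ≤ (k:ℝ) := by positivity
      have hn1R : (0:ℝ) ≤ (n1:ℝ) := by positivity
      have hmR2 : (0:ℝ) ≤ (m:ℝ) := by positivity
      have heval : (e k : ℝ) = (n1 : ℝ) + (k : ℝ) * (4 * (m:ℝ)) := by
        simp only [he]; push_cast; ring
      rw [heval]
      nlinarith
    have hs3 : Summable (fun k : ℕ => (1 / ((n1 : ℝ) + 4 * m)) * (1 / ((k : ℝ) + 1))) :=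
      Summable.of_nonneg_of_le (fun k => by positivity) hterm_ge hsum2
    have hs4 : Summable (fun k : ℕ => 1 / ((k : ℝ) + 1)) := by
      have hmul := hs3.mul_left ((n1 : ℝ) + 4 * m)
      have hApos : (0:ℝ) < (n1 : ℝ) + 4 * m := by positivity
      refine hmul.congr fun k => ?_
      field_simp
    have hs5 : Summable (fun k : ℕ => 1 / (((k + 1 : ℕ)) : ℝ)) :=
      hs4.congr fun k => by push_cast; ring
    exact Real.not_summable_one_div_natCast ((summable_nat_add_iff 1).mp hs5)
  -- partial sums of g tend to infinity
  have hGtend : Tendsto (fun N : ℕ => ∑ n ∈ Finset.Icc 1 N, g n) atTop atTop := by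
    have h1 := (not_summable_iff_tendsto_nat_atTop_of_nonneg hg_nonneg).mp hg_not
    have h2 := h1.comp (tendsto_add_atTop_nat 1)
    exact h2.congr fun N => sum_range_succ_eq_sum_Icc g hg0 N
  -- combine
  have hfinal := hGtend.atTop_add hBtend
  refine hfinal.congr fun N => ?_
  rw [← Finset.sum_add_distrib]
  exact Finset.sum_congr rfl fun n _ => (hterm n).symm
end

section
/- Let θ be a positive irrational number with finite irrationality measure μ, let ν = 1/(2μ−2), and let 0 < ε < min(1, 1 − cos(πθ/2)). Let n₁ < n₂ < ... be the increasing sequence of all positive integers n with 1 − ε ≤ |cos(π n θ)| < 1 − ε/2. Then for every δ ∈ (0, ν) there exists A = A(θ, δ) > 0, independent of ε, such that n_k ≥ A k ε^{−ν+δ} for all k ≥ 1. -/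
open Real Filter


private lemma aux_cos9 (x : ℝ) :
    |Real.cos (Real.pi * x)| = Real.cos (Real.pi * |x - round x|) := by
  have hr2 : |x - (round x : ℝ)| ≤ 1 / 2 := abs_sub_round x
  have harg : Real.pi * x = Real.pi * (x - round x) + (round x : ℤ) * Real.pi := by
    push_cast; ring
  have hcosnn : 0 ≤ Real.cos (Real.pi * (x - round x)) := by
    apply Real.cos_nonneg_of_mem_Icc
    rw [abs_le] at hr2
    constructor <;> [nlinarith [Real.pi_pos]; nlinarith [Real.pi_pos]]
  rw [harg, Real.cos_add_int_mul_pi, abs_mul,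
    show Real.pi * |x - (round x : ℝ)| = |Real.pi * (x - round x)| by
      rw [abs_mul, abs_of_pos Real.pi_pos],
    Real.cos_abs, abs_of_nonneg hcosnn]
  rcases Int.even_or_odd (round x) with hpar | hpar
  · rw [hpar.neg_one_zpow, abs_one, one_mul]
  · rw [hpar.neg_one_zpow, abs_neg, abs_one, one_mul]

private lemma aux_r9 (ε r : ℝ) (hr2 : |r| ≤ 1 / 2)
    (h : 1 - ε ≤ Real.cos (Real.pi * |r|)) : |r| ≤ Real.sqrt (ε / 2) := by
  have hpi0 := Real.pi_pos
  have hjordan : |r| ≤ Real.sin (Real.pi * |r| / 2) := by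
    have h2 := Real.mul_le_sin (x := Real.pi * |r| / 2) (by positivity)
      (by nlinarith [abs_nonneg r])
    calc |r| = 2 / Real.pi * (Real.pi * |r| / 2) := by field_simp
      _ ≤ Real.sin (Real.pi * |r| / 2) := h2
  have hsq : Real.sin (Real.pi * |r| / 2) ^ 2 =
      1 / 2 - Real.cos (Real.pi * |r|) / 2 := by
    have h3 := Real.sin_sq_eq_half_sub (Real.pi * |r| / 2)
    rw [show 2 * (Real.pi * |r| / 2) = Real.pi * |r| by ring] at h3
    exact h3
  have hr' : r ^ 2 ≤ ε / 2 := by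
    have h1 : |r| ^ 2 ≤ Real.sin (Real.pi * |r| / 2) ^ 2 := by
      nlinarith [abs_nonneg r]
    rw [sq_abs] at h1
    nlinarith
  exact Real.abs_le_sqrt hr'

/-- Lemma 1 of the paper: lower bound on the gaps of the sequence of n with
1 − ε ≤ |cos(π n θ)| < 1 − ε/2, for θ irrational with finite irrationality measure μ. -/
theorem stmt9 (θ μ : ℝ) (hθ : 0 < θ) (hirr : Irrational θ)
    (hμθ : ∀ δ' : ℝ, 0 < δ' → ∃ c : ℝ, 0 < c ∧ ∀ (a : ℤ) (b : ℕ), 1 ≤ b →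
      c / (b : ℝ) ^ (μ + δ') < |θ - (a : ℝ) / b|)
    (hμθ' : ∀ δ' : ℝ, 0 < δ' → ∃ c : ℝ, 0 < c ∧ ∀ (a : ℤ) (b : ℕ), 1 ≤ b →
      c / (b : ℝ) ^ (μ + δ') < |1 / θ - (a : ℝ) / b|)
    (ν : ℝ) (hν : ν = 1 / (2 * μ - 2)) (δ : ℝ) (hδ : δ ∈ Set.Ioo 0 ν) :
    ∃ A : ℝ, 0 < A ∧ ∀ ε : ℝ, 0 < ε → ε < min 1 (1 - Real.cos (Real.pi * θ / 2)) →
      ∀ seq : ℕ → ℕ, StrictMono seq →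
        (∀ m : ℕ, m ∈ Set.range seq ↔
          (0 < m ∧ 1 - ε ≤ |Real.cos (Real.pi * m * θ)| ∧
            |Real.cos (Real.pi * m * θ)| < 1 - ε / 2)) →
        ∀ k : ℕ, A * ((k : ℝ) + 1) * ε ^ (-ν + δ) ≤ (seq k : ℝ) := by
  obtain ⟨hδ0, hδν⟩ := hδ
  have hν0 : 0 < ν := hδ0.trans hδν
  have hνδ : 0 < ν - δ := by linarith
  have hμ2 : 0 < 2 * μ - 2 := by
    rcases lt_trichotomy (2 * μ - 2) 0 with h | h | h
    · exfalso; rw [hν] at hν0; have := one_div_neg.mpr h; linarith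
    · exfalso; rw [hν, h] at hν0; simp at hν0
    · exact h
  have hμ1 : μ - 1 = 1 / (2 * ν) := by
    rw [hν]; field_simp
  set δ' := 1 / (2 * (ν - δ)) - (μ - 1) with hδ'def
  have hδ'pos : 0 < δ' := by
    rw [hδ'def, hμ1]
    have h1 : 1 / (2 * ν) < 1 / (2 * (ν - δ)) :=
      one_div_lt_one_div_of_lt (by linarith) (by linarith)
    linarith
  obtain ⟨c, hc0, hc⟩ := hμθ δ' hδ'pos
  set p := μ + δ' - 1 with hpdef
  have hp : p = 1 / (2 * (ν - δ)) := by rw [hpdef, hδ'def]; ring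
  have hp0 : 0 < p := by rw [hp]; positivity
  have hs2 : (0:ℝ) < Real.sqrt 2 := by positivity
  refine ⟨(c / Real.sqrt 2) ^ (2 * (ν - δ)), by positivity, ?_⟩
  set A := (c / Real.sqrt 2) ^ (2 * (ν - δ)) with hAdef
  have hA0 : 0 < A := by rw [hAdef]; positivity
  intro ε hε0 hε1 seq hmono hrange
  set E := ε ^ (-ν + δ) with hEdef
  have hE0 : 0 < E := Real.rpow_pos_of_pos hε0 _
  -- key diophantine bound
  have key : ∀ (n : ℕ) (a : ℤ), 1 ≤ n → |(n : ℝ) * θ - a| ≤ Real.sqrt (2 * ε) →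
      A * E < (n : ℝ) := by
    intro n a hn ha
    have hn0 : (0:ℝ) < n := by exact_mod_cast hn
    have hcn := hc a n hn
    have hse : (0:ℝ) < Real.sqrt (2 * ε) := Real.sqrt_pos.mpr (by linarith)
    have h1 : |θ - (a : ℝ) / n| = |(n : ℝ) * θ - a| / n := by
      rw [show θ - (a : ℝ) / n = ((n : ℝ) * θ - a) / n by field_simp,
        abs_div, abs_of_pos hn0]
    have h2 : c / (n : ℝ) ^ (μ + δ') < Real.sqrt (2 * ε) / n := by
      calc c / (n : ℝ) ^ (μ + δ') < |θ - (a : ℝ) / n| := hcn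
        _ = |(n : ℝ) * θ - a| / n := h1
        _ ≤ Real.sqrt (2 * ε) / n := by gcongr
    have hX : (0:ℝ) < (n : ℝ) ^ (μ + δ') := Real.rpow_pos_of_pos hn0 _
    have h3 : c / Real.sqrt (2 * ε) < (n : ℝ) ^ p := by
      have h2' : c * n < Real.sqrt (2 * ε) * (n : ℝ) ^ (μ + δ') :=
        (div_lt_div_iff₀ hX hn0).mp h2
      rw [hpdef, Real.rpow_sub hn0, Real.rpow_one, div_lt_div_iff₀ hse hn0]
      linarith
    have h4 : (c / Real.sqrt (2 * ε)) ^ (2 * (ν - δ)) <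
        ((n : ℝ) ^ p) ^ (2 * (ν - δ)) :=
      Real.rpow_lt_rpow (by positivity) h3 (by positivity)
    have h5 : ((n : ℝ) ^ p) ^ (2 * (ν - δ)) = (n : ℝ) := by
      rw [← Real.rpow_mul hn0.le,
        show p * (2 * (ν - δ)) = 1 by rw [hp]; field_simp, Real.rpow_one]
    have h6 : (c / Real.sqrt (2 * ε)) ^ (2 * (ν - δ)) = A * E := by
      rw [Real.sqrt_mul (by norm_num : (0:ℝ) ≤ 2) ε, ← div_div,
        Real.div_rpow (by positivity) (Real.sqrt_nonneg ε), hAdef,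
        Real.sqrt_eq_rpow ε, ← Real.rpow_mul hε0.le, hEdef, div_eq_mul_inv,
        ← Real.rpow_neg hε0.le]
      congr 1
      ring
    rw [← h6, ← h5]
    exact h4
  -- elements of the range have small distance to the nearest integer
  have small : ∀ n : ℕ, n ∈ Set.range seq →
      |(n : ℝ) * θ - round ((n : ℝ) * θ)| ≤ Real.sqrt (ε / 2) := by
    intro n hn
    obtain ⟨hnpos, h1ε, -⟩ := (hrange n).mp hn
    apply aux_r9 ε _ (abs_sub_round _)
    rw [← aux_cos9]
    rw [mul_assoc] at h1ε
    exact h1ε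
  have hsqhalf : Real.sqrt (ε / 2) * 2 ≤ Real.sqrt (2 * ε) := by
    rw [show (2:ℝ) * ε = (ε / 2) * 4 by ring,
      Real.sqrt_mul (by positivity) 4,
      show (4:ℝ) = 2 ^ 2 by norm_num, Real.sqrt_sq (by norm_num)]
  -- induction
  intro k
  induction k with
  | zero =>
    have h0 := small (seq 0) ⟨0, rfl⟩
    have hpos : 0 < seq 0 := ((hrange (seq 0)).mp ⟨0, rfl⟩).1
    have := key (seq 0) (round ((seq 0 : ℝ) * θ)) hpos
      (h0.trans (by nlinarith [Real.sqrt_nonneg (ε / 2)]))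
    push_cast
    linarith
  | succ k ih =>
    have hlt : seq k < seq (k + 1) := hmono (Nat.lt_succ_self k)
    set d : ℕ := seq (k + 1) - seq k with hddef
    have hd1 : 1 ≤ d := by omega
    have hdcast : (d : ℝ) = (seq (k + 1) : ℝ) - seq k := by
      rw [hddef]; push_cast [Nat.cast_sub hlt.le]; ring
    have h1 := small (seq k) ⟨k, rfl⟩
    have h2 := small (seq (k + 1)) ⟨k + 1, rfl⟩
    set a : ℤ := round ((seq (k + 1) : ℝ) * θ) - round ((seq k : ℝ) * θ) with hadef
    have hbound : |(d : ℝ) * θ - a| ≤ Real.sqrt (2 * ε) := by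
      have : (d : ℝ) * θ - a =
          ((seq (k + 1) : ℝ) * θ - round ((seq (k + 1) : ℝ) * θ)) -
          ((seq k : ℝ) * θ - round ((seq k : ℝ) * θ)) := by
        rw [hdcast, hadef]; push_cast; ring
      rw [this]
      calc |_ - _| ≤ _ + _ := abs_sub _ _
        _ ≤ Real.sqrt (ε / 2) + Real.sqrt (ε / 2) := by gcongr
        _ ≤ Real.sqrt (2 * ε) := by linarith
    have hkey := key d a hd1 hbound
    rw [hdcast] at hkey
    push_cast at ih ⊢
    nlinarith
end

section
/- Let θ be irrational with finite irrationality measure μ = μ(θ). If α > 1 − 1/(2μ−2), then the series ∑_{n=1}^∞ cos^n(π n θ)/n^α converges absolutely. -/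
open Real Filter

/-- round is the nearest integer -/
lemma aux_round_nearest (x : ℝ) (z : ℤ) : |x - round x| ≤ |x - (z : ℝ)| := by
  rcases eq_or_ne z (round x) with rfl | hz
  · exact le_refl _
  · have h1 : (1 : ℝ) ≤ |(round x : ℝ) - (z : ℝ)| := by
      have : (1 : ℤ) ≤ |round x - z| := Int.one_le_abs (sub_ne_zero.mpr (Ne.symm hz))
      exact_mod_cast (by exact_mod_cast this : (1:ℝ) ≤ (|round x - z| : ℤ))
    have h2 : |x - round x| ≤ 1/2 := abs_sub_round x
    have h3 : |(round x : ℝ) - z| ≤ |x - round x| + |x - z| := by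
      calc |(round x : ℝ) - z| = |(x - z) - (x - round x)| := by ring_nf
        _ ≤ |x - z| + |x - round x| := abs_sub _ _
        _ = |x - round x| + |x - z| := by ring
    linarith

/-- cosine bound via distance to nearest integer -/
lemma aux_cos_bound_s10 (x : ℝ) : |Real.cos (π * x)| ≤ Real.exp (-2 * (x - round x)^2) := by
  obtain ⟨r, hrdef⟩ : ∃ r : ℝ, r = x - round x := ⟨_, rfl⟩
  have hr : |r| ≤ 1/2 := hrdef ▸ abs_sub_round x
  have hx : π * x = π * r + (round x : ℝ) * π := by rw [hrdef]; ring
  have h1 : |Real.cos (π * x)| = |Real.cos (π * r)| := by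
    rw [hx, Real.cos_add_int_mul_pi, abs_mul]
    rcases Int.even_or_odd (round x) with he | he
    · rw [he.neg_one_zpow]; simp
    · rw [Odd.neg_one_zpow he]; simp
  have hrle : -(π/2) ≤ π * r ∧ π * r ≤ π/2 := by
    have hpi := Real.pi_pos
    have h := abs_le.mp hr
    constructor <;> nlinarith [h.1, h.2]
  have h2 : |Real.cos (π * r)| = Real.cos (π * r) :=
    abs_of_nonneg (Real.cos_nonneg_of_mem_Icc ⟨hrle.1, hrle.2⟩)
  have hsin : Real.sin (π * r / 2) ^ 2 = 1/2 - Real.cos (π * r) / 2 := by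
    have := Real.sin_sq_eq_half_sub (π * r / 2)
    rwa [show 2 * (π * r / 2) = π * r by ring] at this
  have hsin2 : r ^ 2 ≤ Real.sin (π * r / 2) ^ 2 := by
    have habs : Real.sin (π * |r| / 2) ^ 2 = Real.sin (π * r / 2) ^ 2 := by
      rcases abs_cases r with ⟨h, _⟩ | ⟨h, _⟩
      · rw [h]
      · rw [h]; rw [show π * -r / 2 = -(π * r / 2) by ring, Real.sin_neg]; ring
    have hge : |r| ≤ Real.sin (π * |r| / 2) := by
      have h0 : (0:ℝ) ≤ π * |r| / 2 := by positivity
      have h1 : π * |r| / 2 ≤ π / 2 := by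
        have hpi := Real.pi_pos
        nlinarith [abs_nonneg r]
      have := Real.mul_le_sin h0 h1
      have hπ : 2 / π * (π * |r| / 2) = |r| := by
        field_simp
      linarith [hπ ▸ this]
    calc r ^ 2 = |r| ^ 2 := (sq_abs r).symm
      _ ≤ Real.sin (π * |r| / 2) ^ 2 := by
          apply pow_le_pow_left₀ (abs_nonneg r) hge
      _ = Real.sin (π * r / 2) ^ 2 := habs
  have h3 : Real.cos (π * r) ≤ 1 - 2 * r^2 := by linarith [hsin, hsin2]
  have h4 : (1 : ℝ) - 2 * r^2 ≤ Real.exp (-2 * r^2) := by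
    have := Real.add_one_le_exp (-2 * r^2)
    linarith
  rw [← hrdef, h1, h2]
  linarith

lemma aux_good_summable (α ε : ℝ) (hε : 0 < ε) :
    Summable (fun n : ℕ => Real.exp (-2 * ((n:ℝ)+1)^ε) / ((n:ℝ)+1)^α) := by
  have key : Tendsto (fun x : ℝ => x ^ ((2-α)/ε) * Real.exp (-2 * x)) atTop (nhds 0) :=
    tendsto_rpow_mul_exp_neg_mul_atTop_nhds_zero _ 2 two_pos
  have comp : Tendsto (fun x : ℝ => (x^ε) ^ ((2-α)/ε) * Real.exp (-2 * x^ε)) atTop (nhds 0) :=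
    key.comp (tendsto_rpow_atTop hε)
  have heq : ∀ᶠ x : ℝ in atTop, (x^ε) ^ ((2-α)/ε) * Real.exp (-2 * x^ε)
      = x ^ (2-α) * Real.exp (-2 * x^ε) := by
    filter_upwards [eventually_ge_atTop (0:ℝ)] with x hx
    rw [← Real.rpow_mul hx, mul_div_cancel₀ _ (ne_of_gt hε)]
  have key2 : Tendsto (fun x : ℝ => x ^ (2-α) * Real.exp (-2 * x^ε)) atTop (nhds 0) :=
    comp.congr' heq
  have hev : ∀ᶠ x : ℝ in atTop, x ^ (2-α) * Real.exp (-2 * x^ε) ≤ 1 := by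
    filter_upwards [key2.eventually (eventually_le_nhds one_pos)] with x hx using hx
  have hevn : ∀ᶠ n : ℕ in atTop,
      Real.exp (-2 * ((n:ℝ)+1)^ε) / ((n:ℝ)+1)^α ≤ ((n:ℝ)+1) ^ (-(2:ℝ)) := by
    have : Tendsto (fun n : ℕ => ((n:ℝ)+1)) atTop atTop :=
      tendsto_atTop_add_const_right _ 1 tendsto_natCast_atTop_atTop
    filter_upwards [this.eventually hev] with n hn
    have hpos : (0:ℝ) < (n:ℝ)+1 := by positivity
    have h1 : ((n:ℝ)+1) ^ (2-α) * Real.exp (-2 * ((n:ℝ)+1)^ε) ≤ 1 := hn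
    have h2 : Real.exp (-2 * ((n:ℝ)+1)^ε) / ((n:ℝ)+1)^α
        = (((n:ℝ)+1) ^ (2-α) * Real.exp (-2 * ((n:ℝ)+1)^ε)) * ((n:ℝ)+1) ^ (-(2:ℝ)) := by
      rw [mul_comm (((n:ℝ)+1) ^ (2-α)), mul_assoc, ← Real.rpow_add hpos]
      rw [show (2 - α) + -2 = -α by ring, Real.rpow_neg hpos.le, div_eq_mul_inv]
    rw [h2]
    nlinarith [Real.rpow_pos_of_pos hpos (-(2:ℝ)), Real.exp_pos (-2 * ((n:ℝ)+1)^ε),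
      Real.rpow_pos_of_pos hpos (2-α), (Real.rpow_pos_of_pos hpos (-(2:ℝ))).le]
  have hg : Summable (fun n : ℕ => ((n:ℝ)+1) ^ (-(2:ℝ))) := by
    have h0 : Summable (fun n : ℕ => ((n:ℝ)) ^ (-(2:ℝ))) :=
      Real.summable_nat_rpow.mpr (by norm_num)
    have := (summable_nat_add_iff 1).mpr h0
    refine this.congr fun n => ?_
    push_cast
    ring_nf
  apply summable_of_isBigO_nat hg
  apply Asymptotics.IsBigO.of_bound 1
  filter_upwards [hevn] with n hn
  have hpos : (0:ℝ) < (n:ℝ)+1 := by positivity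
  rw [one_mul, Real.norm_eq_abs, Real.norm_eq_abs, abs_of_nonneg (by positivity),
    abs_of_nonneg (Real.rpow_nonneg hpos.le _)]
  exact hn

lemma aux_bad_summable (P : ℕ → Prop) [DecidablePred P] (c₂ γ α : ℝ)
    (hc₂ : 0 < c₂) (hc₂1 : c₂ ≤ 1) (hγ0 : 0 < γ) (hγ1 : γ ≤ 1)
    (hs : 1 < α + γ)
    (hgap : ∀ m n : ℕ, 1 ≤ n → n < m → P n → P m → c₂ * (n:ℝ)^γ < (m:ℝ) - (n:ℝ)) :
    Summable (fun n : ℕ => if P (n+1) then ((n:ℝ)+1) ^ (-α) else 0) := by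
  set s : ℝ := α + γ with hsdef
  set G : ℕ → ℕ := fun n => ⌊c₂ * (n:ℝ)^γ⌋₊ + 1 with hGdef
  set I : ℕ → Finset ℕ := fun n => Finset.Ico n (n + min (G n) n) with hIdef
  set F : ℕ → ℝ := fun j => (j:ℝ)^(-s) with hFdef
  have hF : Summable F := Real.summable_nat_rpow.mpr (by linarith)
  have hFnn : ∀ j, 0 ≤ F j := fun j => Real.rpow_nonneg (Nat.cast_nonneg j) _
  set S : ℝ := ∑' j, F j with hSdef
  set K : ℝ := 2^s / c₂ with hKdef
  have hK : 0 < K := div_pos (Real.rpow_pos_of_pos two_pos s) hc₂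
  -- key per-element estimate
  have keylem : ∀ m : ℕ, 1 ≤ m → (m:ℝ) ^ (-α) ≤ K * ∑ j ∈ I m, F j := by
    intro m hm
    have hm0 : (0:ℝ) < m := by exact_mod_cast hm
    have hm1 : (1:ℝ) ≤ m := by exact_mod_cast hm
    have hcard : (I m).card = min (G m) m := by
      simp [hIdef]
    have hGm : c₂ * (m:ℝ)^γ < G m := by
      have := Nat.lt_floor_add_one (c₂ * (m:ℝ)^γ)
      exact_mod_cast this
    have hmm : c₂ * (m:ℝ)^γ ≤ m := by
      have h1 : (m:ℝ)^γ ≤ (m:ℝ)^(1:ℝ) := Real.rpow_le_rpow_of_exponent_le hm1 hγ1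
      rw [Real.rpow_one] at h1
      nlinarith [Real.rpow_nonneg hm0.le γ]
    have hmincard : c₂ * (m:ℝ)^γ ≤ ((I m).card : ℝ) := by
      rw [hcard]
      rcases min_cases (G m) m with ⟨h, _⟩ | ⟨h, _⟩
      · rw [h]; exact hGm.le
      · rw [h]; exact hmm
    have hjsmall : ∀ j ∈ I m, ((2:ℝ) * m) ^ (-s) ≤ F j := by
      intro j hj
      rw [hIdef] at hj
      simp only [Finset.mem_Ico] at hj
      have hj1 : m ≤ j := hj.1
      have hj2 : (j:ℝ) ≤ 2 * m := by
        have h1 : j < m + min (G m) m := hj.2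
        have h2 : min (G m) m ≤ m := min_le_right _ _
        have h3 : j ≤ 2 * m := by omega
        have := (Nat.cast_le (α := ℝ)).mpr h3
        push_cast at this
        linarith
      have hjpos : (0:ℝ) < j := by
        have : 1 ≤ j := le_trans hm hj1
        exact_mod_cast this
      exact Real.rpow_le_rpow_of_nonpos hjpos hj2 (by linarith)
    have hsum : ((I m).card : ℝ) * ((2:ℝ)*m)^(-s) ≤ ∑ j ∈ I m, F j := by
      have := Finset.card_nsmul_le_sum (I m) F (((2:ℝ)*m)^(-s)) hjsmall
      simpa [nsmul_eq_mul] using this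
    have h2m : ((2:ℝ)*m)^(-s) = 2^(-s) * (m:ℝ)^(-s) :=
      Real.mul_rpow (by norm_num) hm0.le
    have hlow : c₂ * 2^(-s) * (m:ℝ)^(-α) ≤ ∑ j ∈ I m, F j := by
      have h3 : c₂ * (m:ℝ)^γ * ((2:ℝ)*m)^(-s) ≤ ((I m).card : ℝ) * ((2:ℝ)*m)^(-s) := by
        apply mul_le_mul_of_nonneg_right hmincard (Real.rpow_nonneg (by positivity) _)
      have h4 : c₂ * (m:ℝ)^γ * ((2:ℝ)*m)^(-s) = c₂ * 2^(-s) * (m:ℝ)^(-α) := by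
        rw [h2m]
        have : (m:ℝ)^γ * (m:ℝ)^(-s) = (m:ℝ)^(-α) := by
          rw [← Real.rpow_add hm0]
          congr 1
          rw [hsdef]; ring
        calc c₂ * (m:ℝ)^γ * (2^(-s) * (m:ℝ)^(-s))
            = c₂ * 2^(-s) * ((m:ℝ)^γ * (m:ℝ)^(-s)) := by ring
          _ = c₂ * 2^(-s) * (m:ℝ)^(-α) := by rw [this]
      linarith [le_trans h3 hsum, h4 ▸ (le_trans h3 hsum)]
    -- conclude
    have h2s : (0:ℝ) < 2^s := Real.rpow_pos_of_pos two_pos s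
    have h2negs : (2:ℝ)^(-s) = (2^s)⁻¹ := Real.rpow_neg (by norm_num) s
    calc (m:ℝ)^(-α) = K * (c₂ * 2^(-s) * (m:ℝ)^(-α)) := by
          rw [hKdef, h2negs]
          field_simp
      _ ≤ K * ∑ j ∈ I m, F j := by
          apply mul_le_mul_of_nonneg_left hlow hK.le
  -- disjointness
  have hdisj : ∀ n₁ n₂ : ℕ, 1 ≤ n₁ → 1 ≤ n₂ → P n₁ → P n₂ → n₁ ≠ n₂ →
      Disjoint (I n₁) (I n₂) := by
    have key : ∀ n₁ n₂ : ℕ, 1 ≤ n₁ → 1 ≤ n₂ → P n₁ → P n₂ → n₁ < n₂ →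
        Disjoint (I n₁) (I n₂) := by
      intro n₁ n₂ h1 h2 hP1 hP2 hlt
      have hg := hgap n₂ n₁ h1 hlt hP1 hP2
      have hfl : ⌊c₂ * (n₁:ℝ)^γ⌋₊ < n₂ - n₁ := by
        rw [Nat.floor_lt (by positivity)]
        have : ((n₂ - n₁ : ℕ):ℝ) = (n₂:ℝ) - n₁ := by
          push_cast [Nat.cast_sub hlt.le]; ring
        linarith [this ▸ hg]
      have hGle : n₁ + G n₁ ≤ n₂ := by
        have : G n₁ ≤ n₂ - n₁ := hfl
        omega
      rw [Finset.disjoint_left]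
      intro j hj1 hj2
      rw [hIdef] at hj1 hj2
      simp only [Finset.mem_Ico] at hj1 hj2
      have : j < n₁ + G n₁ := lt_of_lt_of_le hj1.2 (by omega)
      omega
    intro n₁ n₂ h1 h2 hP1 hP2 hne
    rcases lt_or_gt_of_ne hne with h | h
    · exact key n₁ n₂ h1 h2 hP1 hP2 h
    · exact (key n₂ n₁ h2 h1 hP2 hP1 h).symm
  -- summability via bounded partial sums
  apply summable_of_sum_range_le (c := K * S)
  · intro n
    by_cases h : P (n+1) <;> simp [h] <;> positivity
  · intro N
    have hstep : ∑ n ∈ Finset.range N, (if P (n+1) then ((n:ℝ)+1) ^ (-α) else 0)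
        = ∑ n ∈ (Finset.range N).filter (fun n => P (n+1)), ((n:ℝ)+1) ^ (-α) := by
      rw [Finset.sum_filter]
    rw [hstep]
    set T := (Finset.range N).filter (fun n => P (n+1)) with hT
    have hstep2 : ∑ n ∈ T, ((n:ℝ)+1) ^ (-α) ≤ ∑ n ∈ T, K * ∑ j ∈ I (n+1), F j := by
      apply Finset.sum_le_sum
      intro n hn
      have := keylem (n+1) (by omega)
      simpa [Nat.cast_add, Nat.cast_one] using this
    have hstep3 : ∑ n ∈ T, K * ∑ j ∈ I (n+1), F j
        = K * ∑ j ∈ T.biUnion (fun n => I (n+1)), F j := by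
      rw [← Finset.mul_sum]
      congr 1
      rw [Finset.sum_biUnion]
      intro a ha b hb hab
      simp only [hT, Finset.coe_filter, Set.mem_setOf_eq, Finset.mem_range] at ha hb
      exact hdisj (a+1) (b+1) (by omega) (by omega) ha.2 hb.2 (by omega)
    have hstep4 : ∑ j ∈ T.biUnion (fun n => I (n+1)), F j ≤ S :=
      Summable.sum_le_tsum _ (fun j _ => hFnn j) hF
    calc ∑ n ∈ T, ((n:ℝ)+1) ^ (-α) ≤ ∑ n ∈ T, K * ∑ j ∈ I (n+1), F j := hstep2
      _ = K * ∑ j ∈ T.biUnion (fun n => I (n+1)), F j := hstep3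
      _ ≤ K * S := mul_le_mul_of_nonneg_left hstep4 hK.le

lemma aux_case1 (θ μ : ℝ) (hμ2 : μ < 2)
    (hμ : ∀ δ' : ℝ, 0 < δ' → ∃ c : ℝ, 0 < c ∧ ∀ (a : ℤ) (b : ℕ), 1 ≤ b →
      c / (b : ℝ) ^ (μ + δ') < |θ - (a : ℝ) / b|) : False := by
  set m : ℝ := max μ 1 with hmdef
  have hm1 : 1 ≤ m := le_max_right _ _
  have hm2 : m < 2 := max_lt hμ2 one_lt_two
  have hμm : μ ≤ m := le_max_left _ _
  set e : ℝ := (2 + m) / 2 with hedef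
  have he1 : 1 ≤ e := by rw [hedef]; linarith
  have he2 : e < 2 := by rw [hedef]; linarith
  have hδ' : 0 < e - μ := by rw [hedef]; linarith
  obtain ⟨c, hc, hcb⟩ := hμ (e - μ) hδ'
  rw [show μ + (e - μ) = e by ring] at hcb
  -- choose n large
  obtain ⟨n, hn⟩ := exists_nat_gt ((1/c) ^ (1/(2-e)))
  have hx : (0:ℝ) < (1/c) ^ (1/(2-e)) := Real.rpow_pos_of_pos (by positivity) _
  have hn0 : 0 < n := by
    have : (0:ℝ) < (n:ℝ) := hx.trans hn
    exact_mod_cast this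
  obtain ⟨j, k, hk0, hkn, hjk⟩ := Real.exists_int_int_abs_mul_sub_le θ hn0
  set b : ℕ := k.toNat with hbdef
  have hb1 : 1 ≤ b := by omega
  have hbk : (b:ℝ) = (k:ℝ) := by
    have h : (b : ℤ) = k := hbdef ▸ Int.toNat_of_nonneg hk0.le
    exact_mod_cast congrArg (fun z : ℤ => (z:ℝ)) h
  have hK0 : (0:ℝ) < (k:ℝ) := by exact_mod_cast hk0
  have hK1 : (1:ℝ) ≤ (k:ℝ) := by exact_mod_cast hk0
  have hKn : (k:ℝ) ≤ (n:ℝ) := by exact_mod_cast hkn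
  have hN : (0:ℝ) < (n:ℝ) + 1 := by positivity
  -- the lower bound from hμ
  have hlow : c / (k:ℝ) ^ e < |θ - (j:ℝ) / k| := by
    have := hcb j b hb1
    rwa [hbk] at this
  -- the upper bound from Dirichlet
  have hup : |θ - (j:ℝ) / k| ≤ 1 / ((k:ℝ) * ((n:ℝ)+1)) := by
    have h1 : θ - (j:ℝ)/k = ((k:ℝ) * θ - j) / k := by field_simp
    rw [h1, abs_div, abs_of_pos hK0, div_le_div_iff₀ hK0 (by positivity)]
    calc |(k:ℝ) * θ - j| * ((k:ℝ) * ((n:ℝ)+1)) ≤ (1/((n:ℝ)+1)) * ((k:ℝ) * ((n:ℝ)+1)) := by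
          apply mul_le_mul_of_nonneg_right hjk (by positivity)
      _ = 1 * (k:ℝ) := by field_simp
  have hke : (0:ℝ) < (k:ℝ) ^ e := Real.rpow_pos_of_pos hK0 e
  -- combine: c * (n+1) < k^(e-1)
  have step1 : c * ((n:ℝ)+1) < (k:ℝ) ^ (e - 1) := by
    have h1 : c / (k:ℝ)^e < 1 / ((k:ℝ) * ((n:ℝ)+1)) := lt_of_lt_of_le hlow hup
    rw [div_lt_div_iff₀ hke (by positivity)] at h1
    -- c * (k * (n+1)) < k^e = k^(e-1) * k
    have h2 : (k:ℝ) ^ (e-1) * (k:ℝ) = (k:ℝ) ^ e := by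
      rw [show (k:ℝ)^(e-1) * (k:ℝ) = (k:ℝ)^(e-1) * (k:ℝ)^(1:ℝ) by rw [Real.rpow_one],
        ← Real.rpow_add hK0]
      norm_num
    rw [one_mul] at h1
    rw [← h2] at h1
    have hke1 : (0:ℝ) < (k:ℝ)^(e-1) := Real.rpow_pos_of_pos hK0 _
    nlinarith
  have step2 : (k:ℝ) ^ (e-1) ≤ ((n:ℝ)+1) ^ (e-1) :=
    Real.rpow_le_rpow hK0.le (by linarith) (by linarith)
  have step3 : c < ((n:ℝ)+1) ^ (e - 2) := by
    have h1 : c * ((n:ℝ)+1) < ((n:ℝ)+1) ^ (e-1) := lt_of_lt_of_le step1 step2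
    have h2 : ((n:ℝ)+1) ^ (e-2) * ((n:ℝ)+1) = ((n:ℝ)+1) ^ (e-1) := by
      rw [show ((n:ℝ)+1)^(e-2) * ((n:ℝ)+1) = ((n:ℝ)+1)^(e-2) * ((n:ℝ)+1)^(1:ℝ) by
        rw [Real.rpow_one], ← Real.rpow_add hN]
      congr 1
      ring
    rw [← h2] at h1
    exact lt_of_mul_lt_mul_right h1 hN.le
  -- but (n+1)^(e-2) < c from choice of n
  have step4 : ((n:ℝ)+1) ^ (e-2) < c := by
    have h1 : (1/c) ^ (1/(2-e)) < (n:ℝ)+1 := by linarith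
    have h2e : (0:ℝ) < 2 - e := by linarith
    have h2 : ((1/c) ^ (1/(2-e))) ^ (2-e) < ((n:ℝ)+1) ^ (2-e) :=
      Real.rpow_lt_rpow hx.le h1 h2e
    rw [← Real.rpow_mul (by positivity),
      show 1/(2-e) * (2-e) = 1 by field_simp, Real.rpow_one, one_div] at h2
    -- c⁻¹ < (n+1)^(2-e)
    have h3 : ((n:ℝ)+1) ^ (e-2) = (((n:ℝ)+1) ^ (2-e))⁻¹ := by
      rw [← Real.rpow_neg hN.le, show -(2-e) = e-2 by ring]
    rw [h3]
    have h4 : (0:ℝ) < ((n:ℝ)+1) ^ (2-e) := Real.rpow_pos_of_pos hN _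
    have h5 := inv_strictAnti₀ (inv_pos.mpr hc) h2
    rwa [inv_inv] at h5
  linarith

set_option maxHeartbeats 1600000 in
/-- If θ is irrational with finite irrationality measure μ and α > 1 − 1/(2μ−2),
then ∑ cosⁿ(π n θ)/n^α converges absolutely. -/
theorem stmt10 (θ μ α : ℝ) (hirr : Irrational θ)
    (hμ : ∀ δ' : ℝ, 0 < δ' → ∃ c : ℝ, 0 < c ∧ ∀ (a : ℤ) (b : ℕ), 1 ≤ b →
      c / (b : ℝ) ^ (μ + δ') < |θ - (a : ℝ) / b|)
    (hα : 1 - 1 / (2 * μ - 2) < α) :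
    Summable (fun n : ℕ =>
      |Real.cos (Real.pi * ((n : ℝ) + 1) * θ) ^ (n + 1) / ((n : ℝ) + 1) ^ α|) := by
  classical
  by_cases hμ2 : μ < 2
  · exact (aux_case1 θ μ hμ2 hμ).elim
  push_neg at hμ2
  -- parameter selection
  set P : ℝ := μ - 1 with hPdef
  have hP1 : 1 ≤ P := by rw [hPdef]; linarith
  have hP0 : 0 < P := by linarith
  set t : ℝ := max (1-α) (1/(4*P)) with htdef
  have ht0 : 0 < t := lt_of_lt_of_le (by positivity) (le_max_right _ _)
  have htα : 1 - α ≤ t := le_max_left _ _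
  have htP : t < 1/(2*P) := by
    apply max_lt
    · have h22 : 2*μ - 2 = 2*P := by rw [hPdef]; ring
      rw [h22] at hα
      linarith
    · rw [div_lt_div_iff₀ (by positivity) (by positivity)]
      nlinarith
  have h2tP : t * (2*P) < 1 := (lt_div_iff₀ (by positivity)).mp htP
  set δ : ℝ := (1/(2*t) - P)/2 with hδdef
  have hδ0 : 0 < δ := by
    have hp : P * (2*t) < 1 := by calc P * (2*t) = t * (2*P) := by ring
                                    _ < 1 := h2tP
    have hp2 : P < 1/(2*t) := (lt_div_iff₀ (by positivity)).mpr hp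
    rw [hδdef]; linarith
  have htPδ : t * (P + δ) < 1/2 := by
    have htne : t ≠ 0 := ne_of_gt ht0
    have hexp : t * (P + δ) = t*P/2 + 1/4 := by
      rw [hδdef]; field_simp; ring
    have htp : t * P < 1/2 := by nlinarith
    rw [hexp]; linarith
  set β : ℝ := (t*(P+δ) + 1/2)/2 with hβdef
  have htPδ0 : 0 < t*(P+δ) := by positivity
  have hβ2 : β < 1/2 := by rw [hβdef]; linarith
  have hβ1 : t*(P+δ) < β := by rw [hβdef]; linarith
  have hβ0 : 0 < β := by rw [hβdef]; linarith
  set γ : ℝ := β/(P+δ) with hγdef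
  have hPδ1 : 1 ≤ P + δ := by linarith
  have hPδ0 : 0 < P + δ := by linarith
  have hγ0 : 0 < γ := div_pos hβ0 hPδ0
  have hγβ : γ ≤ β := by rw [hγdef]; exact div_le_self hβ0.le hPδ1
  have hγ1 : γ ≤ 1 := le_trans hγβ (by linarith)
  have hαγ : 1 - γ < α := by
    have h1 : (1-α) * (P+δ) ≤ t * (P+δ) := mul_le_mul_of_nonneg_right htα hPδ0.le
    have h2 : (1-α) * (P+δ) < β := lt_of_le_of_lt h1 hβ1
    have h3 : 1 - α < β/(P+δ) := (lt_div_iff₀ hPδ0).mpr h2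
    rw [hγdef]; linarith
  have hα0 : 0 < α := by linarith
  have hs1 : 1 < α + γ := by linarith
  -- the constant from hμ
  obtain ⟨c₀, hc₀, hc₀b⟩ := hμ δ hδ0
  set c : ℝ := min c₀ 1 with hcdef
  have hc0 : 0 < c := lt_min hc₀ one_pos
  have hc1 : c ≤ 1 := min_le_right _ _
  have hcb : ∀ (a : ℤ) (b : ℕ), 1 ≤ b → c / (b:ℝ)^(μ+δ) < |θ - (a:ℝ)/b| := by
    intro a b hb
    refine lt_of_le_of_lt ?_ (hc₀b a b hb)
    have hbp : (0:ℝ) < (b:ℝ)^(μ+δ) :=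
      Real.rpow_pos_of_pos (by exact_mod_cast hb) _
    gcongr
    exact min_le_left _ _
  -- distance to nearest integer
  set d : ℕ → ℝ := fun m => |(m:ℝ)*θ - round ((m:ℝ)*θ)| with hddef
  have lemA : ∀ m : ℕ, 1 ≤ m → c * (m:ℝ)^(-(P+δ)) < d m := by
    intro m hm
    have hm0 : (0:ℝ) < m := by exact_mod_cast hm
    have hrp : (0:ℝ) < (m:ℝ)^(μ+δ) := Real.rpow_pos_of_pos hm0 _
    have h1 := hcb (round ((m:ℝ)*θ)) m hm
    have h2 : θ - ((round ((m:ℝ)*θ)):ℝ)/m = ((m:ℝ)*θ - round ((m:ℝ)*θ))/m := by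
      field_simp
    rw [h2, abs_div, abs_of_pos hm0] at h1
    rw [div_lt_div_iff₀ hrp hm0] at h1
    -- h1 : c * m < d m * m^(μ+δ)   (as |...| = d m)
    have hkey : (m:ℝ)^(-(P+δ)) * (m:ℝ)^(μ+δ) = (m:ℝ) := by
      rw [← Real.rpow_add hm0, show -(P+δ)+(μ+δ) = 1 by rw [hPdef]; ring, Real.rpow_one]
    have hgoal : c * (m:ℝ)^(-(P+δ)) * (m:ℝ)^(μ+δ) < d m * (m:ℝ)^(μ+δ) := by
      calc c * (m:ℝ)^(-(P+δ)) * (m:ℝ)^(μ+δ) = c * ((m:ℝ)^(-(P+δ)) * (m:ℝ)^(μ+δ)) := by ring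
        _ = c * m := by rw [hkey]
        _ < d m * (m:ℝ)^(μ+δ) := h1
    exact lt_of_mul_lt_mul_right hgoal hrp.le
  -- gap constant
  set c₂ : ℝ := min ((c/2)^((P+δ)⁻¹)) 1 with hc₂def
  have hc₂0 : 0 < c₂ := lt_min (Real.rpow_pos_of_pos (by linarith) _) one_pos
  have hc₂1 : c₂ ≤ 1 := min_le_right _ _
  -- gap lemma
  have hgap : ∀ m n : ℕ, 1 ≤ n → n < m → (d n < (n:ℝ)^(-β)) → (d m < (m:ℝ)^(-β)) →
      c₂ * (n:ℝ)^γ < (m:ℝ) - (n:ℝ) := by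
    intro m n hn hnm hBn hBm
    have hn0 : (0:ℝ) < n := by exact_mod_cast hn
    have hm0 : (0:ℝ) < m := by exact_mod_cast (by omega : 1 ≤ m)
    set k : ℕ := m - n with hkdef
    have hk1 : 1 ≤ k := by omega
    have hkpos : (0:ℝ) < k := by exact_mod_cast hk1
    have hkc : (k:ℝ) = (m:ℝ) - n := by
      rw [hkdef]; push_cast [Nat.cast_sub hnm.le]; ring
    have htri : d k ≤ d m + d n := by
      have h1 : d k ≤ |(k:ℝ)*θ - ((round ((m:ℝ)*θ) - round ((n:ℝ)*θ) : ℤ):ℝ)| :=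
        aux_round_nearest _ _
      have h2 : (k:ℝ)*θ - ((round ((m:ℝ)*θ) - round ((n:ℝ)*θ) : ℤ):ℝ)
          = ((m:ℝ)*θ - round ((m:ℝ)*θ)) - ((n:ℝ)*θ - round ((n:ℝ)*θ)) := by
        push_cast [hkc]; ring
      calc d k ≤ |(k:ℝ)*θ - ((round ((m:ℝ)*θ) - round ((n:ℝ)*θ) : ℤ):ℝ)| := h1
        _ = |((m:ℝ)*θ - round ((m:ℝ)*θ)) - ((n:ℝ)*θ - round ((n:ℝ)*θ))| := by rw [h2]
        _ ≤ |(m:ℝ)*θ - round ((m:ℝ)*θ)| + |(n:ℝ)*θ - round ((n:ℝ)*θ)| := abs_sub _ _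
        _ = d m + d n := rfl
    have hmono : (m:ℝ)^(-β) ≤ (n:ℝ)^(-β) :=
      Real.rpow_le_rpow_of_nonpos hn0 (by exact_mod_cast hnm.le) (by linarith)
    have hdk2 : d k < 2 * (n:ℝ)^(-β) := by linarith
    have h3 : c * (k:ℝ)^(-(P+δ)) < 2 * (n:ℝ)^(-β) := lt_trans (lemA k hk1) hdk2
    have hx : (0:ℝ) < (k:ℝ)^(P+δ) := Real.rpow_pos_of_pos hkpos _
    have hy : (0:ℝ) < (n:ℝ)^β := Real.rpow_pos_of_pos hn0 _
    rw [Real.rpow_neg hkpos.le, Real.rpow_neg hn0.le] at h3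
    have h4 : c / (k:ℝ)^(P+δ) < 2 / (n:ℝ)^β := by
      rw [div_eq_mul_inv, div_eq_mul_inv]; exact h3
    have h5 : c * (n:ℝ)^β < 2 * (k:ℝ)^(P+δ) := (div_lt_div_iff₀ hx hy).mp h4
    have h6 : (c/2) * (n:ℝ)^β < (k:ℝ)^(P+δ) := by linarith
    have h7 := Real.rpow_lt_rpow (by positivity) h6 (inv_pos.mpr hPδ0)
    rw [Real.mul_rpow (by linarith : (0:ℝ) ≤ c/2) (Real.rpow_nonneg hn0.le β),
      ← Real.rpow_mul hn0.le, ← Real.rpow_mul hkpos.le,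
      mul_inv_cancel₀ (ne_of_gt hPδ0), Real.rpow_one] at h7
    have hge : β * (P+δ)⁻¹ = γ := by rw [hγdef, div_eq_mul_inv]
    rw [hge] at h7
    calc c₂ * (n:ℝ)^γ ≤ (c/2)^((P+δ)⁻¹) * (n:ℝ)^γ :=
          mul_le_mul_of_nonneg_right (min_le_left _ _) (Real.rpow_nonneg hn0.le _)
      _ < (k:ℝ) := h7
      _ = (m:ℝ) - n := hkc
  -- summability of the two majorants
  have hbadsum : Summable (fun n : ℕ =>
      if d (n+1) < (((n+1:ℕ)):ℝ)^(-β) then ((n:ℝ)+1) ^ (-α) else 0) :=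
    aux_bad_summable (fun m => d m < (m:ℝ)^(-β)) c₂ γ α hc₂0 hc₂1 hγ0 hγ1 hs1 hgap
  have hgoodsum := aux_good_summable α (1-2*β) (by linarith)
  apply Summable.of_nonneg_of_le (fun n => abs_nonneg _) ?_ (hbadsum.add hgoodsum)
  intro n
  set M : ℝ := (n:ℝ) + 1 with hMdef
  have hM0 : (0:ℝ) < M := by positivity
  have hM1 : (1:ℝ) ≤ M := by rw [hMdef]; simp
  have hMcast : (((n+1:ℕ)):ℝ) = M := by rw [hMdef]; push_cast; ring
  have hMα : (0:ℝ) < M^α := Real.rpow_pos_of_pos hM0 _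
  have habs : |Real.cos (π * M * θ) ^ (n+1) / M^α| = |Real.cos (π * M * θ)|^(n+1) / M^α := by
    rw [abs_div, abs_pow, abs_of_pos hMα]
  have hgood0 : (0:ℝ) ≤ Real.exp (-2 * M^(1-2*β)) / M^α := by positivity
  by_cases hB : d (n+1) < (((n+1:ℕ)):ℝ)^(-β)
  · rw [if_pos hB, habs]
    have h1 : |Real.cos (π * M * θ)|^(n+1) ≤ 1 :=
      pow_le_one₀ (abs_nonneg _) (Real.abs_cos_le_one _)
    have h2 : |Real.cos (π * M * θ)|^(n+1) / M^α ≤ M^(-α) := by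
      rw [Real.rpow_neg hM0.le]
      rw [div_le_iff₀ hMα]
      calc |Real.cos (π * M * θ)|^(n+1) ≤ 1 := h1
        _ = (M^α)⁻¹ * M^α := by rw [inv_mul_cancel₀ (ne_of_gt hMα)]
    exact le_add_of_le_of_nonneg h2 hgood0
  · rw [if_neg hB, zero_add, habs]
    push_neg at hB
    rw [hMcast] at hB
    have hdd : d (n+1) = |M*θ - round (M*θ)| := by
      rw [hddef]; simp only; rw [hMcast]
    have hcosb : |Real.cos (π * M * θ)| ≤ Real.exp (-2 * (d (n+1))^2) := by
      have h := aux_cos_bound_s10 (M * θ)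
      rw [← mul_assoc] at h
      have heq : (d (n+1))^2 = (M*θ - round (M*θ))^2 := by rw [hdd, sq_abs]
      rw [heq]
      exact h
    have hpow : |Real.cos (π * M * θ)|^(n+1) ≤ Real.exp (-2*M^(1-2*β)) := by
      calc |Real.cos (π * M * θ)|^(n+1)
          ≤ (Real.exp (-2 * (d (n+1))^2))^(n+1) :=
            pow_le_pow_left₀ (abs_nonneg _) hcosb _
        _ = Real.exp (((n+1:ℕ):ℝ) * (-2 * (d (n+1))^2)) := (Real.exp_nat_mul _ _).symm
        _ ≤ Real.exp (-2*M^(1-2*β)) := by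
            apply Real.exp_le_exp.mpr
            rw [hMcast]
            have hd2 : M^(-(2*β)) ≤ (d (n+1))^2 := by
              have h0 : (0:ℝ) ≤ M^(-β) := Real.rpow_nonneg hM0.le _
              have h2 : (M^(-β))^(2:ℕ) ≤ (d (n+1))^(2:ℕ) := pow_le_pow_left₀ h0 hB 2
              rw [← Real.rpow_natCast (M^(-β)) 2, ← Real.rpow_mul hM0.le] at h2
              rw [show -β * ((2:ℕ):ℝ) = -(2*β) by push_cast; ring] at h2
              exact h2
            have hM12 : M^(1-2*β) = M * M^(-(2*β)) := by
              rw [show (1:ℝ)-2*β = 1 + -(2*β) by ring, Real.rpow_add hM0, Real.rpow_one]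
            nlinarith [hd2, hM0, Real.rpow_nonneg hM0.le (-(2*β))]
    have : |Real.cos (π * M * θ)|^(n+1) / M^α ≤ Real.exp (-2*M^(1-2*β)) / M^α := by
      gcongr
    exact this
end

section
/- If α > 1/2, then for almost every real θ (with respect to Lebesgue measure) the series ∑_{n=1}^∞ |sin(π n θ)|^n / n^α converges. -/
open Real Filter MeasureTheory

section Aux
open intervalIntegral Set

noncomputable def Jsin (n : ℕ) : ℝ := ∫ x in (0:ℝ)..π, Real.sin x ^ n

lemma Jsin_prod (n : ℕ) : ((n:ℝ)+1) * (Jsin n * Jsin (n+1)) = 2 * π := by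
  induction n with
  | zero => simp [Jsin]; ring
  | succ m ih =>
    have h : Jsin (m+2) = ((m:ℝ)+1)/((m:ℝ)+2) * Jsin m := by
      simp [Jsin, integral_sin_pow m]
    have hm2 : ((m:ℝ)+2) ≠ 0 := by positivity
    push_cast
    calc ((m:ℝ)+1+1) * (Jsin (m+1) * Jsin (m+2))
        = ((m:ℝ)+2) * (Jsin (m+1) * (((m:ℝ)+1)/((m:ℝ)+2) * Jsin m)) := by
          rw [h]; ring_nf
      _ = ((m:ℝ)+1) * (Jsin m * Jsin (m+1)) := by field_simp
      _ = 2 * π := ih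

lemma Jsin_nonneg (n : ℕ) : 0 ≤ Jsin n := by
  apply intervalIntegral.integral_nonneg pi_pos.le
  intro x hx
  exact pow_nonneg (Real.sin_nonneg_of_nonneg_of_le_pi hx.1 hx.2) n

lemma Jsin_anti (n : ℕ) : Jsin (n+1) ≤ Jsin n := by
  apply intervalIntegral.integral_mono_on pi_pos.le
  · exact (Continuous.pow (by continuity) _).intervalIntegrable _ _
  · exact (Continuous.pow (by continuity) _).intervalIntegrable _ _
  · intro x hx
    exact pow_le_pow_of_le_one (Real.sin_nonneg_of_nonneg_of_le_pi hx.1 hx.2)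
      (Real.sin_le_one x) (Nat.le_succ n)

lemma Jsin_le (n : ℕ) (hn : 1 ≤ n) : Jsin n ≤ Real.sqrt (2 * π / n) := by
  obtain ⟨m, rfl⟩ := Nat.exists_eq_add_of_le hn
  rw [Real.le_sqrt (Jsin_nonneg _) (by positivity)]
  have h := Jsin_prod m
  have hm : ((m:ℝ)+1) ≠ 0 := by positivity
  have key : Jsin (m+1) * Jsin (m+1) ≤ Jsin m * Jsin (m+1) :=
    mul_le_mul_of_nonneg_right (Jsin_anti m) (Jsin_nonneg _)
  have : Jsin m * Jsin (m+1) = 2 * π / ((m:ℝ)+1) := by field_simp; linarith [h]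
  have h1 : (1 + m : ℕ) = m + 1 := by omega
  rw [h1]
  push_cast
  calc Jsin (m+1) ^ 2 = Jsin (m+1) * Jsin (m+1) := sq (Jsin (m+1)) ▸ by ring
    _ ≤ 2 * π / ((m:ℝ)+1) := by rw [← this]; exact key

lemma abs_sin_per (n : ℕ) : Function.Periodic (fun u => |Real.sin u| ^ n) π := by
  intro u; simp [Real.sin_add_pi]

lemma abs_sin_int (n : ℕ) : ∀ t₁ t₂ : ℝ,
    IntervalIntegrable (fun u => |Real.sin u| ^ n) volume t₁ t₂ := fun t₁ t₂ =>
  (Continuous.pow (continuous_abs.comp Real.continuous_sin) n).intervalIntegrable t₁ t₂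

lemma abs_sin_eq_Jsin (n : ℕ) : ∫ u in (0:ℝ)..π, |Real.sin u| ^ n = Jsin n := by
  apply intervalIntegral.integral_congr
  intro x hx
  rw [Set.uIcc_of_le pi_pos.le] at hx
  simp [abs_of_nonneg (Real.sin_nonneg_of_nonneg_of_le_pi hx.1 hx.2)]

lemma sub_bound (n : ℕ) (hn : 1 ≤ n) (k : ℤ) :
    ∫ θ in (k:ℝ)..(k:ℝ)+1, |Real.sin (π * n * θ)| ^ n = Jsin n / π := by
  have hc : (π * (n:ℝ)) ≠ 0 := by positivity
  have h2 : ∫ u in (π*n*k : ℝ)..(π*n*k + π), |Real.sin u| ^ n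
      = ∫ u in (0:ℝ)..π, |Real.sin u| ^ n := by
    simpa using (abs_sin_per n).intervalIntegral_add_eq (π*n*(k:ℝ)) 0
  have h3 : (π * (n:ℝ)) * ((k:ℝ)+1) = π * n * k + (n:ℤ) • π := by
    rw [zsmul_eq_mul]; push_cast; ring
  calc ∫ θ in (k:ℝ)..(k:ℝ)+1, |Real.sin (π * n * θ)| ^ n
      = (π * (n:ℝ))⁻¹ • ∫ u in (π * n * k : ℝ)..(π * n * ((k:ℝ)+1)), |Real.sin u| ^ n := by
        rw [intervalIntegral.integral_comp_mul_left (fun u => |Real.sin u| ^ n) hc]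
    _ = (π * (n:ℝ))⁻¹ • ∫ u in (π * n * k : ℝ)..(π * n * k + (n:ℤ) • π), |Real.sin u| ^ n := by
        rw [h3]
    _ = (π * (n:ℝ))⁻¹ • ((n:ℤ) • ∫ u in (π * n * k : ℝ)..(π * n * k + π), |Real.sin u| ^ n) := by
        rw [(abs_sin_per n).intervalIntegral_add_zsmul_eq (n:ℤ) _ (abs_sin_int n)]
    _ = (π * (n:ℝ))⁻¹ • ((n:ℤ) • Jsin n) := by rw [h2, abs_sin_eq_Jsin]
    _ = Jsin n / π := by
        rw [zsmul_eq_mul, smul_eq_mul]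
        push_cast
        field_simp

lemma f_cont (α : ℝ) (n : ℕ) :
    Continuous (fun θ : ℝ => |Real.sin (Real.pi * n * θ)| ^ n / (n : ℝ) ^ α) :=
  ((continuous_abs.comp (Real.continuous_sin.comp (continuous_const.mul continuous_id))).pow n).div_const _

lemma f_nonneg (α : ℝ) (n : ℕ) (θ : ℝ) :
    0 ≤ |Real.sin (Real.pi * n * θ)| ^ n / (n : ℝ) ^ α :=
  div_nonneg (pow_nonneg (abs_nonneg _) n) (Real.rpow_nonneg (Nat.cast_nonneg n) α)

end Aux

/-- If α > 1/2, then for almost every real θ the series ∑ |sin(π n θ)|ⁿ / n^α converges. -/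
theorem stmt13 (α : ℝ) (hα : 1 / 2 < α) :
    ∀ᵐ θ : ℝ ∂volume,
      Summable (fun n : ℕ => |Real.sin (Real.pi * n * θ)| ^ n / (n : ℝ) ^ α) := by
  have hα0 : (0:ℝ) < α := by linarith
  set f : ℕ → ℝ → ℝ := fun n θ => |Real.sin (Real.pi * n * θ)| ^ n / (n : ℝ) ^ α with hf
  -- the dominating summable sequence
  set C : ℝ := Real.sqrt (2 * π) / π with hC
  have hC0 : 0 ≤ C := div_nonneg (Real.sqrt_nonneg _) pi_pos.le
  set g : ℕ → ℝ := fun n => C * ((n:ℝ) ^ (α + 1/2))⁻¹ with hg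
  have hg0 : ∀ n, 0 ≤ g n := fun n =>
    mul_nonneg hC0 (inv_nonneg.2 (Real.rpow_nonneg (Nat.cast_nonneg n) _))
  have hgsum : Summable g :=
    (Real.summable_nat_rpow_inv.2 (by linarith)).mul_left C
  -- pointwise bound for integral over Ioc k (k+1)
  have key : ∀ k : ℤ,
      (volume.restrict (Set.Ioc (k:ℝ) ((k:ℝ)+1))) {θ | ¬ Summable (fun n => f n θ)} = 0 := by
    intro k
    set μ := volume.restrict (Set.Ioc (k:ℝ) ((k:ℝ)+1)) with hμ
    have hbound : ∀ n : ℕ, ∫⁻ θ, ENNReal.ofReal (f n θ) ∂μ ≤ ENNReal.ofReal (g n) := by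
      intro n
      rcases Nat.eq_zero_or_pos n with rfl | hn
      · have : ∀ θ : ℝ, f 0 θ = 0 := by
          intro θ
          simp [hf, Real.zero_rpow hα0.ne']
        simp [this]
      have hint : Integrable (f n) μ := by
        rw [hμ]
        exact ((f_cont α n).integrableOn_Ioc).integrable
      have heq : ∫⁻ θ, ENNReal.ofReal (f n θ) ∂μ = ENNReal.ofReal (∫ θ, f n θ ∂μ) :=
        (MeasureTheory.ofReal_integral_eq_lintegral_ofReal hint
          (Filter.Eventually.of_forall (f_nonneg α n))).symm
      rw [heq]
      apply ENNReal.ofReal_le_ofReal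
      have hle : ((k:ℝ)) ≤ (k:ℝ) + 1 := by linarith
      have h1 : ∫ θ, f n θ ∂μ = ∫ θ in (k:ℝ)..((k:ℝ)+1), f n θ := by
        rw [intervalIntegral.integral_of_le hle, hμ]
      have h2 : ∫ θ in (k:ℝ)..((k:ℝ)+1), f n θ = (Jsin n / π) / (n:ℝ) ^ α := by
        simp only [hf]
        rw [intervalIntegral.integral_div, sub_bound n hn k]
      rw [h1, h2]
      -- now Jsin n / π / n^α ≤ g n
      have hJ : Jsin n ≤ Real.sqrt (2 * π / n) := Jsin_le n hn
      have hn0 : (0:ℝ) < (n:ℝ) := by exact_mod_cast hn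
      have hsq : Real.sqrt (2 * π / n) = Real.sqrt (2 * π) * ((n:ℝ) ^ ((1:ℝ)/2))⁻¹ := by
        rw [← Real.sqrt_eq_rpow, div_eq_mul_inv, Real.sqrt_mul (by positivity), Real.sqrt_inv]
      have hrp : (n:ℝ) ^ (α + 1/2) = (n:ℝ) ^ α * (n:ℝ) ^ ((1:ℝ)/2) := by
        rw [Real.rpow_add hn0]
      have hpos1 : (0:ℝ) < (n:ℝ) ^ α := Real.rpow_pos_of_pos hn0 _
      have hpos2 : (0:ℝ) < (n:ℝ) ^ ((1:ℝ)/2) := Real.rpow_pos_of_pos hn0 _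
      rw [hg]
      calc Jsin n / π / (n:ℝ) ^ α ≤ Real.sqrt (2 * π / n) / π / (n:ℝ) ^ α := by
            gcongr
        _ = C * (((n:ℝ)) ^ (α + 1/2))⁻¹ := by
            rw [hsq, hrp, hC]
            field_simp
    have hmeas : ∀ n : ℕ, Measurable (fun θ => ENNReal.ofReal (f n θ)) := fun n =>
      (f_cont α n).measurable.ennreal_ofReal
    have htsum : ∫⁻ θ, ∑' n, ENNReal.ofReal (f n θ) ∂μ ≠ ⊤ := by
      rw [MeasureTheory.lintegral_tsum (fun n => (hmeas n).aemeasurable)]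
      have : ∑' n, ∫⁻ θ, ENNReal.ofReal (f n θ) ∂μ ≤ ∑' n, ENNReal.ofReal (g n) :=
        ENNReal.tsum_le_tsum hbound
      have hfin : ∑' n, ENNReal.ofReal (g n) < ⊤ := by
        rw [← ENNReal.ofReal_tsum_of_nonneg hg0 hgsum]
        exact ENNReal.ofReal_lt_top
      exact (lt_of_le_of_lt this hfin).ne
    have hae : ∀ᵐ θ ∂μ, ∑' n, ENNReal.ofReal (f n θ) < ⊤ :=
      MeasureTheory.ae_lt_top (Measurable.ennreal_tsum hmeas) htsum
    rw [← MeasureTheory.ae_iff]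
    filter_upwards [hae] with θ hθ
    have hs : Summable (fun n => (ENNReal.ofReal (f n θ)).toReal) :=
      ENNReal.summable_toReal hθ.ne
    refine hs.congr fun n => ?_
    rw [ENNReal.toReal_ofReal (f_nonneg α n θ)]
  -- combine over all intervals
  rw [MeasureTheory.ae_iff]
  have cover : {θ : ℝ | ¬ Summable fun n => f n θ} ⊆
      ⋃ k : ℤ, {θ : ℝ | ¬ Summable fun n => f n θ} ∩ Set.Ioc ((k:ℝ)) ((k:ℝ)+1) := by
    intro θ hθ
    refine Set.mem_iUnion.2 ⟨⌈θ⌉ - 1, hθ, ?_, ?_⟩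
    · push_cast
      linarith [Int.ceil_lt_add_one θ]
    · push_cast
      linarith [Int.le_ceil θ]
  refine measure_mono_null cover (measure_iUnion_null fun k => ?_)
  rw [← Measure.restrict_apply' measurableSet_Ioc]
  exact key k
end

section
/- If α > 1/2, then for almost every real θ (with respect to Lebesgue measure) the series ∑_{n=1}^∞ |cos(π n θ)|^n / n^α converges. -/
open Real Filter MeasureTheory

section Aux

open intervalIntegral Set

lemma wallis_prod (n : ℕ) :
    (∫ x in (0:ℝ)..π, sin x ^ n) * (∫ x in (0:ℝ)..π, sin x ^ (n+1)) = 2 * π / (n+1) := by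
  induction n with
  | zero => simp [integral_sin]; ring
  | succ k ih =>
    have h := integral_sin_pow (a := (0:ℝ)) (b := π) k
    rw [Real.sin_zero, Real.sin_pi] at h
    simp only [zero_pow, ne_eq, Nat.succ_ne_zero, not_false_iff] at h
    have hk : (∫ x in (0:ℝ)..π, sin x ^ (k+2)) = (k+1)/(k+2) * ∫ x in (0:ℝ)..π, sin x ^ k := by
      rw [h]; ring
    have : (∫ x in (0:ℝ)..π, sin x ^ (k+1)) * ∫ x in (0:ℝ)..π, sin x ^ (k+1+1)
        = (k+1)/(k+2) * ((∫ x in (0:ℝ)..π, sin x ^ k) * ∫ x in (0:ℝ)..π, sin x ^ (k+1)) := by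
      rw [show k+1+1 = k+2 from rfl, hk]; ring
    rw [this, ih]
    push_cast
    have : (k:ℝ) + 1 ≠ 0 := by positivity
    field_simp
    ring

lemma sin_pow_int_le (n : ℕ) (hn : 1 ≤ n) :
    (∫ x in (0:ℝ)..π, sin x ^ n) ≤ Real.sqrt (2 * π / n) := by
  obtain ⟨m, rfl⟩ := Nat.exists_eq_add_of_le' hn
  refine Real.le_sqrt_of_sq_le ?_
  have h1 : (∫ x in (0:ℝ)..π, sin x ^ (m+1)) ^ 2 ≤ 2 * π / ((m:ℝ)+1) := by
    rw [← wallis_prod m, sq]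
    exact mul_le_mul_of_nonneg_right (integral_sin_pow_succ_le m)
      (le_of_lt (integral_sin_pow_pos (m+1)))
  convert h1 using 2 <;> push_cast <;> ring

lemma abs_cos_periodic (n : ℕ) : Function.Periodic (fun x : ℝ => |Real.cos x| ^ n) π := by
  intro x; simp [Real.cos_add_pi]

lemma abs_sin_periodic (n : ℕ) : Function.Periodic (fun x : ℝ => |Real.sin x| ^ n) π := by
  intro x; simp [Real.sin_add_pi]

lemma abs_cos_int_zero_pi (n : ℕ) :
    ∫ x in (0:ℝ)..π, |Real.cos x| ^ n = ∫ x in (0:ℝ)..π, Real.sin x ^ n := by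
  have h1 : ∀ x : ℝ, |Real.cos x| ^ n = (fun u => |Real.sin u| ^ n) (x + π/2) := by
    intro x; simp [Real.sin_add_pi_div_two]
  calc ∫ x in (0:ℝ)..π, |Real.cos x| ^ n
      = ∫ x in (0:ℝ)..π, (fun u => |Real.sin u| ^ n) (x + π/2) := by
        simp only [h1]
    _ = ∫ x in ((0:ℝ)+π/2)..(π+π/2), |Real.sin x| ^ n :=
        integral_comp_add_right (fun u => |Real.sin u| ^ n) (π/2)
    _ = ∫ x in (π/2)..(π/2+π), |Real.sin x| ^ n := by rw [zero_add, add_comm π (π/2)]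
    _ = ∫ x in (0:ℝ)..(0+π), |Real.sin x| ^ n :=
        (abs_sin_periodic n).intervalIntegral_add_eq (π/2) 0
    _ = ∫ x in (0:ℝ)..π, Real.sin x ^ n := by
        rw [zero_add]
        refine integral_congr fun x hx => ?_
        rw [uIcc_of_le Real.pi_pos.le] at hx
        rw [abs_of_nonneg (Real.sin_nonneg_of_nonneg_of_le_pi hx.1 hx.2)]

lemma cos_int (n : ℕ) (hn : 1 ≤ n) (t : ℝ) :
    ∫ θ in t..t+2, |Real.cos (π * n * θ)| ^ n = (2/π) * ∫ x in (0:ℝ)..π, Real.sin x ^ n := by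
  have hπ := Real.pi_pos
  have hn1 : (1:ℝ) ≤ (n:ℝ) := by exact_mod_cast hn
  have hπn : (π * n : ℝ) ≠ 0 := by positivity
  have hint : ∀ t₁ t₂ : ℝ, IntervalIntegrable (fun x : ℝ => |Real.cos x| ^ n) volume t₁ t₂ :=
    fun t₁ t₂ => ((Real.continuous_cos.abs.pow n)).intervalIntegrable t₁ t₂
  calc ∫ θ in t..t+2, |Real.cos (π * n * θ)| ^ n
      = (π * n)⁻¹ • ∫ u in (π*n)*t..(π*n)*(t+2), |Real.cos u| ^ n :=
        integral_comp_mul_left (fun u => |Real.cos u| ^ n) hπn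
    _ = (π * n)⁻¹ • ∫ u in (π*n)*t..(π*n)*t + (2*n : ℤ) • π, |Real.cos u| ^ n := by
        congr 2
        simp only [zsmul_eq_mul]
        push_cast
        ring
    _ = (π * n)⁻¹ • ((2*n : ℤ) • ∫ u in (π*n)*t..(π*n)*t + π, |Real.cos u| ^ n) := by
        rw [(abs_cos_periodic n).intervalIntegral_add_zsmul_eq (2*n) ((π*n)*t) hint]
    _ = (π * n)⁻¹ • ((2*n : ℤ) • ∫ u in (0:ℝ)..0 + π, |Real.cos u| ^ n) := by
        rw [(abs_cos_periodic n).intervalIntegral_add_eq ((π*n)*t) 0]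
    _ = (2/π) * ∫ x in (0:ℝ)..π, Real.sin x ^ n := by
        rw [zero_add, abs_cos_int_zero_pi, zsmul_eq_mul, smul_eq_mul]
        push_cast
        have hn0 : (n:ℝ) ≠ 0 := by positivity
        field_simp

lemma ae_on (α : ℝ) (hα : 1 / 2 < α) (t : ℝ) :
    ∀ᵐ θ ∂(volume.restrict (Set.Ioc t (t+2))),
      Summable (fun n : ℕ => |Real.cos (Real.pi * n * θ)| ^ n / (n : ℝ) ^ α) := by
  have hπ := Real.pi_pos
  set f : ℕ → ℝ → ℝ := fun n θ => |Real.cos (π * n * θ)| ^ n / (n : ℝ) ^ α with hf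
  have hα0 : α ≠ 0 := by linarith
  have hfnn : ∀ n θ, 0 ≤ f n θ := fun n θ => by positivity
  have hcont : ∀ n, Continuous (f n) := by
    intro n
    exact ((Real.continuous_cos.comp (continuous_const.mul continuous_id)).abs.pow n).div_const _
  set C : ℝ := (2/π) * Real.sqrt (2*π) with hC
  have hCnn : 0 ≤ C := by positivity
  have hbound : ∀ n : ℕ, (∫⁻ θ in Set.Ioc t (t+2), ENNReal.ofReal (f n θ))
      ≤ ENNReal.ofReal (C * (n:ℝ) ^ (-(1/2 + α))) := by
    intro n
    rcases Nat.eq_zero_or_pos n with rfl | hn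
    · have : ∀ θ, f 0 θ = 0 := by
        intro θ; simp [hf, Real.zero_rpow hα0]
      simp [this]
    · have hn1 : (1:ℝ) ≤ (n:ℝ) := by exact_mod_cast hn
      have hInt : IntegrableOn (f n) (Set.Ioc t (t+2)) volume :=
        ((hcont n).integrableOn_Icc).mono_set Set.Ioc_subset_Icc_self
      rw [← ofReal_integral_eq_lintegral_ofReal hInt
        (Filter.Eventually.of_forall fun θ => hfnn n θ)]
      apply ENNReal.ofReal_le_ofReal
      have heq : ∫ θ in Set.Ioc t (t+2), f n θ
          = (∫ θ in t..t+2, |Real.cos (π * n * θ)| ^ n) / (n:ℝ)^α := by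
        rw [← intervalIntegral.integral_of_le (by linarith : t ≤ t+2),
          ← intervalIntegral.integral_div]
      rw [heq, cos_int n hn]
      have h1 : Real.sqrt (2 * π / n) = Real.sqrt (2*π) * ((n:ℝ) ^ (-(1/2:ℝ))) := by
        rw [Real.sqrt_div' _ (by positivity), Real.sqrt_eq_rpow (n:ℝ),
          Real.rpow_neg (by positivity)]
        ring
      have h2 : C * (n:ℝ) ^ (-(1/2 + α))
          = (2/π) * (Real.sqrt (2*π) * (n:ℝ) ^ (-(1/2:ℝ))) / (n:ℝ)^α := by
        rw [hC]
        rw [show -(1/2 + α) = (-(1/2:ℝ)) + (-α) by ring, Real.rpow_add (by positivity),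
          Real.rpow_neg (by positivity) α, div_eq_mul_inv]
        ring
      rw [h2, ← h1]
      have := sin_pow_int_le n hn
      have hs : 0 ≤ (n:ℝ)^α := by positivity
      gcongr
  have hsum : Summable (fun n : ℕ => C * (n:ℝ) ^ (-(1/2 + α))) :=
    (Real.summable_nat_rpow.mpr (by linarith)).mul_left C
  have htop : (∑' n : ℕ, (∫⁻ θ in Set.Ioc t (t+2), ENNReal.ofReal (f n θ))) ≠ ⊤ := by
    refine ne_top_of_le_ne_top ?_ (ENNReal.tsum_le_tsum hbound)
    rw [← ENNReal.ofReal_tsum_of_nonneg (fun n => by positivity) hsum]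
    exact ENNReal.ofReal_ne_top
  have hmeas : ∀ n, Measurable (fun θ => ENNReal.ofReal (f n θ)) :=
    fun n => (hcont n).measurable.ennreal_ofReal
  have hlt : ∀ᵐ θ ∂(volume.restrict (Set.Ioc t (t+2))),
      (∑' n : ℕ, ENNReal.ofReal (f n θ)) < ⊤ := by
    apply ae_lt_top (Measurable.ennreal_tsum hmeas)
    rw [lintegral_tsum (fun n => (hmeas n).aemeasurable)]
    exact htop
  filter_upwards [hlt] with θ hθ
  have := ENNReal.summable_toReal hθ.ne
  refine this.congr fun n => ?_
  rw [ENNReal.toReal_ofReal (hfnn n θ)]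

end Aux

/-- If α > 1/2, then for almost every real θ the series ∑ |cos(π n θ)|ⁿ / n^α converges. -/
theorem stmt14 (α : ℝ) (hα : 1 / 2 < α) :
    ∀ᵐ θ : ℝ ∂volume,
      Summable (fun n : ℕ => |Real.cos (Real.pi * n * θ)| ^ n / (n : ℝ) ^ α) := by
  rw [ae_iff]
  set N : Set ℝ :=
    {θ | ¬ Summable (fun n : ℕ => |Real.cos (Real.pi * n * θ)| ^ n / (n : ℝ) ^ α)}
  have hpiece : ∀ k : ℤ, volume (N ∩ Set.Ioc (2*(k:ℝ)) (2*(k:ℝ) + 2)) = 0 := by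
    intro k
    have h := ae_on α hα (2*(k:ℝ))
    rw [ae_iff] at h
    rw [Measure.restrict_apply' measurableSet_Ioc] at h
    exact h
  have hsub : N ⊆ ⋃ k : ℤ, (N ∩ Set.Ioc (2*(k:ℝ)) (2*(k:ℝ) + 2)) := by
    intro θ hθ
    refine Set.mem_iUnion.mpr ⟨⌈θ/2⌉ - 1, hθ, ?_, ?_⟩
    · push_cast
      have := Int.ceil_lt_add_one (θ/2)
      linarith
    · push_cast
      have := Int.le_ceil (θ/2)
      linarith
  refine le_antisymm ?_ zero_le
  calc volume N ≤ ∑' k : ℤ, volume (N ∩ Set.Ioc (2*(k:ℝ)) (2*(k:ℝ) + 2)) :=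
        (measure_mono hsub).trans (measure_iUnion_le _)
    _ = 0 := by simp [hpiece]
end

section
/- For α < 1, as z → 1⁻, ∑_{k=1}^∞ z^k / k^α is asymptotically equivalent to Γ(1−α) (log(1/z))^{α−1}. -/
open Real Filter MeasureTheory Set

noncomputable def ff (α y : ℝ) : ℝ := Real.exp (-y) * y ^ (-α)

lemma ff_meas (α t : ℝ) : Measurable (fun x : ℝ => ff α (t * ⌈x / t⌉₊)) := by
  have h1 : Measurable (fun x : ℝ => t * (⌈x / t⌉₊ : ℝ)) :=
    measurable_const.mul ((measurable_from_nat).comp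
      (Nat.measurable_ceil.comp (measurable_id.div_const t)))
  have h2 : Measurable (fun y : ℝ => ff α y) := by
    unfold ff; fun_prop
  exact h2.comp h1

lemma h2int (α : ℝ) :
    IntegrableOn (fun x : ℝ => Real.exp (-x) * (x + 1) ^ (-α)) (Set.Ioi 0) := by
  apply integrable_of_isBigO_exp_neg (b := 1/2) one_half_pos
  · apply ContinuousOn.mul (by fun_prop)
    apply ContinuousOn.rpow_const (by fun_prop)
    intro x hx
    have : (0:ℝ) < x + 1 := by simp only [mem_Ici] at hx; linarith
    exact Or.inl this.ne'
  · apply Asymptotics.IsLittleO.isBigO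
    rw [Asymptotics.isLittleO_iff_tendsto (fun x h => absurd h (exp_ne_zero _))]
    have key : Tendsto (fun x : ℝ => (x+1) ^ (-α) * Real.exp (-(1/2) * (x+1)))
        atTop (nhds 0) :=
      (tendsto_rpow_mul_exp_neg_mul_atTop_nhds_zero (-α) (1/2) one_half_pos).comp
        (tendsto_atTop_add_const_right _ 1 tendsto_id)
    have : Tendsto (fun x : ℝ => ((x+1) ^ (-α) * Real.exp (-(1/2) * (x+1))) * Real.exp (1/2))
        atTop (nhds (0 * Real.exp (1/2))) := key.mul_const _
    rw [zero_mul] at this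
    apply this.congr
    intro x
    rw [eq_div_iff (exp_ne_zero _),
      show Real.exp (-x) = Real.exp (-(1/2) * (x+1)) * Real.exp (1/2) * Real.exp (-(1/2)*x) by
        rw [← Real.exp_add, ← Real.exp_add]; congr 1; ring]
    ring

lemma gInt (α : ℝ) (hα : α < 1) :
    IntegrableOn (fun x : ℝ => Real.exp (-x) * x ^ (-α) + Real.exp (-x) * (x + 1) ^ (-α))
      (Set.Ioi 0) := by
  have h1 := Real.GammaIntegral_convergent (s := 1 - α) (by linarith)
  have h1' : IntegrableOn (fun x : ℝ => Real.exp (-x) * x ^ (-α)) (Set.Ioi 0) := by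
    simpa using h1
  exact h1'.add (h2int α)

lemma hUnion (t : ℝ) (ht : 0 < t) :
    Set.Ioi (0:ℝ) = ⋃ k : ℕ, Set.Ioc ((k:ℝ) * t) (((k:ℝ) + 1) * t) := by
  ext x
  simp only [Set.mem_Ioi, Set.mem_iUnion, Set.mem_Ioc]
  constructor
  · intro hx
    have hxt : 0 < x / t := div_pos hx ht
    have h1 : 1 ≤ ⌈x / t⌉₊ := Nat.one_le_ceil_iff.mpr hxt
    refine ⟨⌈x / t⌉₊ - 1, ?_, ?_⟩
    · have hcast : ((⌈x / t⌉₊ - 1 : ℕ) : ℝ) = (⌈x / t⌉₊ : ℝ) - 1 := by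
        push_cast [h1]; ring
      rw [hcast]
      have := Nat.ceil_lt_add_one hxt.le
      rw [← lt_div_iff₀ ht]
      linarith
    · have hcast : ((⌈x / t⌉₊ - 1 : ℕ) : ℝ) + 1 = (⌈x / t⌉₊ : ℝ) := by
        push_cast [h1]; ring
      rw [hcast, ← div_le_iff₀ ht]
      exact Nat.le_ceil _
  · rintro ⟨k, h1, _⟩
    have : (0:ℝ) ≤ (k:ℝ) * t := by positivity
    linarith

lemma ceil_on_piece {t x : ℝ} (ht : 0 < t) {k : ℕ}
    (hx : x ∈ Set.Ioc ((k:ℝ) * t) (((k:ℝ) + 1) * t)) : ⌈x / t⌉₊ = k + 1 := by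
  obtain ⟨h1, h2⟩ := hx
  rw [Nat.ceil_eq_iff (Nat.succ_ne_zero k)]
  constructor
  · push_cast
    rw [lt_div_iff₀ ht]
    simpa using h1
  · rw [div_le_iff₀ ht]
    push_cast
    exact h2

lemma step_eq (α t : ℝ) (ht : 0 < t)
    (hint : IntegrableOn (fun x : ℝ => ff α (t * ⌈x / t⌉₊)) (Set.Ioi 0)) :
    ∫ x in Set.Ioi (0:ℝ), ff α (t * ⌈x / t⌉₊)
      = ∑' k : ℕ, t * ff α (t * ((k:ℝ) + 1)) := by
  have hmeas : ∀ k : ℕ, MeasurableSet (Set.Ioc ((k:ℝ) * t) (((k:ℝ) + 1) * t)) :=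
    fun k => measurableSet_Ioc
  have hdisj : Pairwise (Function.onFun Disjoint
      (fun k : ℕ => Set.Ioc ((k:ℝ) * t) (((k:ℝ) + 1) * t))) := by
    intro i j hij
    rw [Function.onFun, Set.Ioc_disjoint_Ioc]
    rcases hij.lt_or_gt with h | h
    · have : (i:ℝ) + 1 ≤ (j:ℝ) := by exact_mod_cast h
      refine le_trans (min_le_left _ _) (le_trans ?_ (le_max_right _ _))
      nlinarith
    · have : (j:ℝ) + 1 ≤ (i:ℝ) := by exact_mod_cast h
      refine le_trans (min_le_right _ _) (le_trans ?_ (le_max_left _ _))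
      nlinarith
  rw [hUnion t ht] at hint ⊢
  rw [MeasureTheory.integral_iUnion hmeas hdisj hint]
  congr 1
  funext k
  have hconst : ∀ x ∈ Set.Ioc ((k:ℝ) * t) (((k:ℝ) + 1) * t),
      ff α (t * ⌈x / t⌉₊) = ff α (t * ((k:ℝ) + 1)) := by
    intro x hx
    rw [ceil_on_piece ht hx]
    push_cast
    ring_nf
  rw [MeasureTheory.setIntegral_congr_fun measurableSet_Ioc hconst,
    MeasureTheory.setIntegral_const, measureReal_def, Real.volume_Ioc, smul_eq_mul]
  rw [ENNReal.toReal_ofReal (by nlinarith)]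
  ring_nf

lemma bound_ptwise (α : ℝ) {t x : ℝ} (ht : t ∈ Set.Ioo (0:ℝ) 1) (hx : 0 < x) :
    ‖ff α (t * ⌈x / t⌉₊)‖ ≤ Real.exp (-x) * x ^ (-α) + Real.exp (-x) * (x + 1) ^ (-α) := by
  obtain ⟨ht0, ht1⟩ := ht
  set y := t * (⌈x / t⌉₊ : ℝ) with hy
  have hxy : x ≤ y := by
    rw [hy, mul_comm, ← div_le_iff₀ ht0]
    exact Nat.le_ceil _
  have hyx : y ≤ x + t := by
    have := Nat.ceil_lt_add_one (le_of_lt (div_pos hx ht0))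
    rw [hy, mul_comm]
    calc (⌈x / t⌉₊ : ℝ) * t ≤ (x / t + 1) * t := by nlinarith
    _ = x + t := by field_simp
  have hy0 : 0 < y := lt_of_lt_of_le hx hxy
  have hyx1 : y ≤ x + 1 := by linarith
  have hnorm : ‖ff α y‖ = Real.exp (-y) * y ^ (-α) := by
    rw [Real.norm_eq_abs, abs_of_nonneg]
    · rfl
    · exact mul_nonneg (Real.exp_pos _).le (Real.rpow_nonneg hy0.le _)
  rw [hnorm]
  have hexp : Real.exp (-y) ≤ Real.exp (-x) := Real.exp_le_exp.mpr (by linarith)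
  have hpow : y ^ (-α) ≤ x ^ (-α) + (x + 1) ^ (-α) := by
    rcases le_or_gt 0 α with hα0 | hα0
    · have h1 : y ^ (-α) ≤ x ^ (-α) :=
        Real.rpow_le_rpow_of_nonpos hx hxy (by linarith)
      have h2 : 0 ≤ (x + 1) ^ (-α) := Real.rpow_nonneg (by linarith) _
      linarith
    · have h1 : y ^ (-α) ≤ (x + 1) ^ (-α) :=
        Real.rpow_le_rpow hy0.le hyx1 (by linarith)
      have h2 : 0 ≤ x ^ (-α) := Real.rpow_nonneg hx.le _
      linarith
  calc Real.exp (-y) * y ^ (-α) ≤ Real.exp (-x) * (x ^ (-α) + (x + 1) ^ (-α)) := by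
        apply mul_le_mul hexp hpow (Real.rpow_nonneg hy0.le _) (Real.exp_pos _).le
  _ = Real.exp (-x) * x ^ (-α) + Real.exp (-x) * (x + 1) ^ (-α) := by ring

lemma main_lim (α : ℝ) (hα : α < 1) :
    Tendsto (fun t : ℝ => ∫ x in Set.Ioi (0:ℝ), ff α (t * ⌈x / t⌉₊))
      (nhdsWithin 0 (Set.Ioo 0 1)) (nhds (Real.Gamma (1 - α))) := by
  have hG : Real.Gamma (1 - α) = ∫ x in Set.Ioi (0:ℝ), ff α x := by
    rw [Real.Gamma_eq_integral (by linarith)]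
    unfold ff
    norm_num
  rw [hG]
  apply MeasureTheory.tendsto_integral_filter_of_dominated_convergence
    (bound := fun x => Real.exp (-x) * x ^ (-α) + Real.exp (-x) * (x + 1) ^ (-α))
  · filter_upwards with t
    exact ((ff_meas α t).aestronglyMeasurable).restrict
  · filter_upwards [self_mem_nhdsWithin] with t ht
    filter_upwards [MeasureTheory.ae_restrict_mem measurableSet_Ioi] with x hx
    exact bound_ptwise α ht hx
  · exact gInt α hα
  · filter_upwards [MeasureTheory.ae_restrict_mem measurableSet_Ioi] with x hx
    have hcont : ContinuousAt (ff α) x := by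
      apply ContinuousAt.mul
      · exact (continuous_exp.comp continuous_neg).continuousAt
      · exact Real.continuousAt_rpow_const x (-α) (Or.inl (ne_of_gt hx))
    have hinner : Tendsto (fun t : ℝ => t * (⌈x / t⌉₊ : ℝ))
        (nhdsWithin 0 (Set.Ioo 0 1)) (nhds x) := by
      have hupper : Tendsto (fun t : ℝ => x + t) (nhdsWithin 0 (Set.Ioo 0 1)) (nhds x) := by
        have : Tendsto (fun t : ℝ => x + t) (nhdsWithin 0 (Set.Ioo 0 1)) (nhds (x + 0)) :=
          (tendsto_const_nhds.add (tendsto_id.mono_left nhdsWithin_le_nhds))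
        simpa using this
      apply tendsto_of_tendsto_of_tendsto_of_le_of_le' tendsto_const_nhds hupper
      · filter_upwards [self_mem_nhdsWithin] with t ht
        rw [mul_comm, ← div_le_iff₀ ht.1]
        exact Nat.le_ceil _
      · filter_upwards [self_mem_nhdsWithin] with t ht
        have := Nat.ceil_lt_add_one (le_of_lt (div_pos hx ht.1))
        calc t * (⌈x / t⌉₊ : ℝ) ≤ t * (x / t + 1) :=
              mul_le_mul_of_nonneg_left this.le ht.1.le
        _ = x + t := by
              rw [mul_add, mul_one, mul_div_cancel₀ _ (ne_of_gt ht.1)]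
    exact hcont.tendsto.comp hinner

lemma sum_eq (α : ℝ) {t : ℝ} (ht : 0 < t) :
    ∑' k : ℕ, t * ff α (t * ((k:ℝ) + 1))
      = (∑' k : ℕ, Real.exp (-(((k:ℝ) + 1) * t)) * ((k:ℝ) + 1) ^ (-α)) * t ^ (1 - α) := by
  rw [← tsum_mul_right]
  congr 1
  funext k
  have hk : (0:ℝ) < (k:ℝ) + 1 := by positivity
  unfold ff
  rw [Real.mul_rpow ht.le hk.le,
    Real.rpow_sub ht, Real.rpow_one, Real.rpow_neg ht.le, div_eq_mul_inv, ← Real.rpow_neg ht.le]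
  rw [mul_comm t ((k:ℝ)+1)]
  ring

lemma main2 (α : ℝ) (hα : α < 1) :
    Tendsto (fun t : ℝ =>
        (∑' k : ℕ, Real.exp (-(((k:ℝ) + 1) * t)) * ((k:ℝ) + 1) ^ (-α)) * t ^ (1 - α))
      (nhdsWithin 0 (Set.Ioo 0 1)) (nhds (Real.Gamma (1 - α))) := by
  apply (main_lim α hα).congr'
  filter_upwards [self_mem_nhdsWithin] with t ht
  have hint : IntegrableOn (fun x : ℝ => ff α (t * ⌈x / t⌉₊)) (Set.Ioi 0) := by
    apply MeasureTheory.Integrable.mono' (gInt α hα)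
      ((ff_meas α t).aestronglyMeasurable).restrict
    filter_upwards [MeasureTheory.ae_restrict_mem measurableSet_Ioi] with x hx
    exact bound_ptwise α ht hx
  rw [step_eq α t ht.1 hint, sum_eq α ht.1]

lemma neg_log_tendsto :
    Tendsto (fun z : ℝ => -Real.log z) (nhdsWithin 1 (Set.Ioo 0 1))
      (nhdsWithin 0 (Set.Ioo 0 1)) := by
  rw [tendsto_nhdsWithin_iff]
  constructor
  · have h : Tendsto (fun z : ℝ => -Real.log z) (nhds 1) (nhds (-Real.log 1)) :=
      ((Real.continuousAt_log one_ne_zero).neg).tendsto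
    rw [Real.log_one, neg_zero] at h
    exact h.mono_left nhdsWithin_le_nhds
  · have h1 : ∀ᶠ z : ℝ in nhdsWithin 1 (Set.Ioo 0 1), Real.exp (-1) < z := by
      apply eventually_nhdsWithin_of_eventually_nhds
      apply eventually_gt_nhds
      rw [← Real.exp_zero]
      exact Real.exp_lt_exp.mpr (by norm_num)
    filter_upwards [self_mem_nhdsWithin, h1] with z hz hez
    constructor
    · simpa using Real.log_neg hz.1 hz.2
    · have : -1 < Real.log z := (Real.lt_log_iff_exp_lt hz.1).mpr hez
      linarith

/-- For α < 1, ∑ zᵏ/k^α ~ Γ(1−α) (log(1/z))^{α−1} as z → 1⁻. -/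
theorem stmt17 (α : ℝ) (hα : α < 1) :
    Tendsto (fun z : ℝ =>
        (∑' k : ℕ, z ^ (k + 1) / ((k : ℝ) + 1) ^ α) /
          (Real.Gamma (1 - α) * Real.log (1 / z) ^ (α - 1)))
      (nhdsWithin 1 (Set.Ioo 0 1)) (nhds 1) := by
  have hΓ : 0 < Real.Gamma (1 - α) := Real.Gamma_pos_of_pos (by linarith)
  have hmain := ((main2 α hα).comp neg_log_tendsto).div_const (Real.Gamma (1 - α))
  rw [div_self hΓ.ne'] at hmain
  apply hmain.congr'
  filter_upwards [self_mem_nhdsWithin] with z hz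
  obtain ⟨hz0, hz1⟩ := hz
  have ht : 0 < -Real.log z := by simpa using Real.log_neg hz0 hz1
  have hlog : Real.log (1 / z) = -Real.log z := by
    rw [one_div, Real.log_inv]
  -- rewrite the summand
  have hsummand : ∀ k : ℕ, z ^ (k + 1) / ((k : ℝ) + 1) ^ α
      = Real.exp (-(((k:ℝ) + 1) * (-Real.log z))) * ((k:ℝ) + 1) ^ (-α) := by
    intro k
    have hk : (0:ℝ) < (k:ℝ) + 1 := by positivity
    rw [Real.rpow_neg hk.le, div_eq_mul_inv]
    congr 1
    rw [show -(((k:ℝ) + 1) * -Real.log z) = ((k + 1 : ℕ) : ℝ) * Real.log z by push_cast; ring,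
      Real.exp_nat_mul, Real.exp_log hz0]
  have hpow : Real.log (1 / z) ^ (α - 1) = ((-Real.log z) ^ (1 - α))⁻¹ := by
    rw [hlog, show α - 1 = -(1 - α) by ring, Real.rpow_neg ht.le]
  simp only [Function.comp]
  rw [hpow]
  have hne : ((-Real.log z) ^ ((1:ℝ) - α)) ≠ 0 :=
    (Real.rpow_pos_of_pos ht _).ne'
  rw [tsum_congr hsummand]
  field_simp
  exact tsum_congr fun k => by ring
end
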